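/- arXiv:1606.00216 — 9 statements merged into one kernel-verified Lean document; each statement's English description precedes it below -/
import Mathlib

section
/- Let m ≥ 1 and let ρ, σ be coprime integers. Then the cyclically presented group G_m(x_0^ρ x_1^{-σ}) = ⟨x_0,…,x_{m-1} | x_i^ρ = x_{i+1}^σ (indices mod m)⟩ is cyclic of order |ρ^m − σ^m| (infinite cyclic if ρ^m = σ^m), and each generator x_i generates the whole group. -/
/-- The relators of the cyclically presented group `G_m(x_0^ρ x_1^{-σ})`:
the shifts `x_i^ρ x_{i+1}^{-σ}` for `i ∈ ℤ/m`. -/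
def cycRels (m : ℕ) (ρ σ : ℤ) : Set (FreeGroup (ZMod m)) :=
  Set.range (fun i : ZMod m => FreeGroup.of i ^ ρ * FreeGroup.of (i + 1) ^ (-σ))

namespace CycAux

variable {m : ℕ} {ρ σ : ℤ}

local notation "x" => fun i => PresentedGroup.of (rels := cycRels m ρ σ) i

lemma rel (i : ZMod m) :
    PresentedGroup.of (rels := cycRels m ρ σ) i ^ ρ
      = PresentedGroup.of (rels := cycRels m ρ σ) (i + 1) ^ σ := by
  have h : PresentedGroup.mk (cycRels m ρ σ)
      (FreeGroup.of i ^ ρ * FreeGroup.of (i + 1) ^ (-σ)) = 1 := by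
    apply (QuotientGroup.eq_one_iff _).mpr
    exact Subgroup.subset_normalClosure ⟨i, rfl⟩
  rw [map_mul, map_zpow, map_zpow, zpow_neg, mul_inv_eq_one] at h
  exact h

lemma chain (i : ZMod m) : ∀ k : ℕ,
    PresentedGroup.of (rels := cycRels m ρ σ) i ^ (ρ ^ k)
      = PresentedGroup.of (rels := cycRels m ρ σ) (i + (k : ZMod m)) ^ (σ ^ k)
  | 0 => by simp
  | k + 1 => by
    have h1 := chain i k
    have : (ρ ^ (k+1) : ℤ) = ρ ^ k * ρ := by ring
    rw [this, zpow_mul, h1, ← zpow_mul, mul_comm, zpow_mul, rel (i + (k : ZMod m)),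
      ← zpow_mul, mul_comm]
    push_cast
    rw [add_assoc, pow_succ]

lemma order (hm : 1 ≤ m) (i : ZMod m) :
    PresentedGroup.of (rels := cycRels m ρ σ) i ^ (ρ ^ m - σ ^ m) = 1 := by
  have h := chain (ρ := ρ) (σ := σ) i m
  rw [ZMod.natCast_self, add_zero] at h
  rw [zpow_sub, h, mul_inv_cancel]


lemma coprime_aux (hm : 1 ≤ m) (hρσ : Int.gcd ρ σ = 1) :
    IsCoprime σ (ρ ^ m - σ ^ m) := by
  have h0 : IsCoprime ρ σ := Int.isCoprime_iff_gcd_eq_one.mpr hρσ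
  have h1 : IsCoprime σ (ρ ^ m) := h0.symm.pow_right
  have h2 := h1.add_mul_left_right (-(σ ^ (m - 1)))
  have h3 : ρ ^ m + σ * -σ ^ (m - 1) = ρ ^ m - σ ^ m := by
    have : σ ^ m = σ ^ (m - 1) * σ := by
      rw [← pow_succ]; congr 1; omega
    rw [this]; ring
  rwa [h3] at h2

lemma step (hm : 1 ≤ m) (hρσ : Int.gcd ρ σ = 1) (i : ZMod m) :
    ∃ c : ℤ, PresentedGroup.of (rels := cycRels m ρ σ) (i + 1)
      = PresentedGroup.of (rels := cycRels m ρ σ) i ^ c := by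
  obtain ⟨t, k, htk⟩ := coprime_aux hm hρσ
  refine ⟨ρ * t, ?_⟩
  have h1 : PresentedGroup.of (rels := cycRels m ρ σ) (i + 1)
      = PresentedGroup.of (rels := cycRels m ρ σ) (i + 1) ^ (t * σ + k * (ρ ^ m - σ ^ m)) := by
    rw [htk, zpow_one]
  rw [h1, mul_comm t σ, mul_comm k (ρ ^ m - σ ^ m), zpow_add, zpow_mul, zpow_mul,
    order hm (i + 1), one_zpow, mul_one, ← rel i, ← zpow_mul]

lemma mem_zpowers (hm : 1 ≤ m) (hρσ : Int.gcd ρ σ = 1) (i j : ZMod m) :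
    PresentedGroup.of (rels := cycRels m ρ σ) j
      ∈ Subgroup.zpowers (PresentedGroup.of (rels := cycRels m ρ σ) i) := by
  haveI : NeZero m := ⟨by omega⟩
  have key : ∀ k : ℕ, PresentedGroup.of (rels := cycRels m ρ σ) (i + (k : ZMod m))
      ∈ Subgroup.zpowers (PresentedGroup.of (rels := cycRels m ρ σ) i) := by
    intro k
    induction k with
    | zero => simpa using Subgroup.mem_zpowers _
    | succ k ih =>
      obtain ⟨c, hc⟩ := step hm hρσ (i + (k : ZMod m))
      push_cast
      rw [← add_assoc, hc]
      exact Subgroup.zpow_mem _ ih c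
  have := key (j - i).val
  rwa [ZMod.natCast_val, ZMod.cast_id, add_sub_cancel] at this

lemma zpowers_top (hm : 1 ≤ m) (hρσ : Int.gcd ρ σ = 1) (i : ZMod m) :
    Subgroup.zpowers (PresentedGroup.of (rels := cycRels m ρ σ) i) = ⊤ := by
  rw [eq_top_iff, ← PresentedGroup.closure_range_of (cycRels m ρ σ)]
  rw [Subgroup.closure_le]
  rintro - ⟨j, rfl⟩
  exact mem_zpowers hm hρσ i j


lemma int_key (ρ σ : ℤ) (m v w : ℕ) (hm : 1 ≤ m) (hv : v < m) (hw : w = (v + 1) % m) :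
    (ρ ^ m - σ ^ m) ∣ ρ * (σ ^ (m - 1 - v) * ρ ^ v) - σ * (σ ^ (m - 1 - w) * ρ ^ w) := by
  rcases Nat.lt_or_ge (v + 1) m with h | h
  · have hw' : w = v + 1 := by rw [hw, Nat.mod_eq_of_lt h]
    have : ρ * (σ ^ (m - 1 - v) * ρ ^ v) - σ * (σ ^ (m - 1 - w) * ρ ^ w) = 0 := by
      rw [hw', show m - 1 - v = (m - 1 - (v + 1)) + 1 by omega, pow_succ, pow_succ]
      ring
    rw [this]
    exact dvd_zero _
  · have hv' : v = m - 1 := by omega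
    have hw' : w = 0 := by rw [hw, show v + 1 = m by omega, Nat.mod_self]
    have : ρ * (σ ^ (m - 1 - v) * ρ ^ v) - σ * (σ ^ (m - 1 - w) * ρ ^ w)
        = ρ ^ m - σ ^ m := by
      rw [hv', hw', show m - 1 - (m - 1) = 0 by omega, show m = (m - 1) + 1 by omega]
      simp [pow_succ]
      ring
    rw [this]

lemma lift_rel (hm : 1 ≤ m) :
    ∀ r ∈ cycRels m ρ σ, FreeGroup.lift
      (fun i : ZMod m => Multiplicative.ofAdd
        (((σ ^ (m - 1 - i.val) * ρ ^ i.val : ℤ) : ZMod (ρ ^ m - σ ^ m).natAbs))) r = 1 := by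
  haveI : NeZero m := ⟨by omega⟩
  rintro - ⟨i, rfl⟩
  rw [map_mul, map_zpow, map_zpow, FreeGroup.lift_apply_of, FreeGroup.lift_apply_of,
    ← ofAdd_zsmul, ← ofAdd_zsmul, ← ofAdd_add, ofAdd_eq_one, zsmul_eq_mul, zsmul_eq_mul]
  have hw : (i + 1).val = (i.val + 1) % m := by
    conv_lhs => rw [show i = ((i.val : ℕ) : ZMod m) by rw [ZMod.natCast_val, ZMod.cast_id]]
    rw [show (((i.val : ℕ) : ZMod m) + 1) = (((i.val + 1 : ℕ)) : ZMod m) by push_cast; ring,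
      ZMod.val_natCast]
  have key : ((ρ * (σ ^ (m - 1 - i.val) * ρ ^ i.val)
        - σ * (σ ^ (m - 1 - (i + 1).val) * ρ ^ (i + 1).val) : ℤ)
      : ZMod (ρ ^ m - σ ^ m).natAbs) = 0 := by
    rw [ZMod.intCast_zmod_eq_zero_iff_dvd]
    exact (Int.natAbs_dvd.mpr (int_key ρ σ m i.val (i + 1).val hm (ZMod.val_lt i) hw))
  push_cast at key ⊢
  linear_combination key

noncomputable def phi (hm : 1 ≤ m) :
    PresentedGroup (cycRels m ρ σ) →* Multiplicative (ZMod (ρ ^ m - σ ^ m).natAbs) :=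
  PresentedGroup.toGroup (lift_rel hm)

lemma phi_of (hm : 1 ≤ m) (i : ZMod m) :
    phi hm (PresentedGroup.of (rels := cycRels m ρ σ) i)
      = Multiplicative.ofAdd (((σ ^ (m - 1 - i.val) * ρ ^ i.val : ℤ)
        : ZMod (ρ ^ m - σ ^ m).natAbs)) :=
  PresentedGroup.toGroup.of _

lemma phi_of_zero (hm : 1 ≤ m) :
    phi (ρ := ρ) (σ := σ) hm (PresentedGroup.of (rels := cycRels m ρ σ) 0)
      = Multiplicative.ofAdd (((σ ^ (m - 1) : ℤ) : ZMod (ρ ^ m - σ ^ m).natAbs)) := by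
  haveI : NeZero m := ⟨by omega⟩
  rw [phi_of hm 0]
  congr 1
  rw [ZMod.val_zero, Nat.sub_zero, pow_zero, mul_one]

lemma phi_inj (hm : 1 ≤ m) (hρσ : Int.gcd ρ σ = 1) :
    Function.Injective (phi (m := m) (ρ := ρ) (σ := σ) hm) := by
  apply (injective_iff_map_eq_one _).mpr
  intro g hg
  have hmem : g ∈ Subgroup.zpowers (PresentedGroup.of (rels := cycRels m ρ σ) 0) := by
    rw [zpowers_top hm hρσ 0]; trivial
  obtain ⟨c, rfl⟩ := Subgroup.mem_zpowers_iff.mp hmem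
  rw [map_zpow, phi_of_zero hm, ← ofAdd_zsmul, zsmul_eq_mul] at hg
  have h0 : ((c * σ ^ (m - 1) : ℤ) : ZMod (ρ ^ m - σ ^ m).natAbs) = 0 := by
    have h := ofAdd_eq_one.mp hg
    push_cast at h ⊢
    linear_combination h
  rw [ZMod.intCast_zmod_eq_zero_iff_dvd, Int.natAbs_dvd] at h0
  have hcop : IsCoprime (ρ ^ m - σ ^ m) (σ ^ (m - 1)) :=
    (coprime_aux hm hρσ).symm.pow_right
  obtain ⟨d, hd⟩ := hcop.dvd_of_dvd_mul_right h0
  rw [hd, zpow_mul, order hm 0, one_zpow]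

lemma phi_surj (hm : 1 ≤ m) (hρσ : Int.gcd ρ σ = 1) :
    Function.Surjective (phi (m := m) (ρ := ρ) (σ := σ) hm) := by
  intro y
  obtain ⟨c, hc⟩ := ZMod.intCast_surjective (Multiplicative.toAdd y)
  have hcop2 : IsCoprime (σ ^ (m - 1)) (ρ ^ m - σ ^ m) :=
    (coprime_aux hm hρσ).pow_left
  obtain ⟨u, v, huv⟩ := hcop2
  refine ⟨PresentedGroup.of (rels := cycRels m ρ σ) 0 ^ (c * u), ?_⟩
  rw [map_zpow, phi_of_zero hm, ← ofAdd_zsmul, zsmul_eq_mul]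
  have key : ((c * u * σ ^ (m - 1) - c : ℤ) : ZMod (ρ ^ m - σ ^ m).natAbs) = 0 := by
    rw [ZMod.intCast_zmod_eq_zero_iff_dvd, Int.natAbs_dvd]
    exact ⟨-(c * v), by linear_combination c * huv⟩
  conv_rhs => rw [← ofAdd_toAdd y, ← hc]
  congr 1
  push_cast at key ⊢
  linear_combination key

end CycAux


/-- for `m ≥ 1` and coprime integers `ρ, σ`, the cyclically presented
group `G_m(x_0^ρ x_1^{-σ})` is cyclic of order `|ρ^m - σ^m|` (infinite cyclic when
`ρ^m = σ^m`, in which case `Nat.card = 0`), and each generator `x_i` generates the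
whole group. -/
theorem stmt_0 (m : ℕ) (hm : 1 ≤ m) (ρ σ : ℤ) (hρσ : Int.gcd ρ σ = 1) :
    IsCyclic (PresentedGroup (cycRels m ρ σ)) ∧
    Nat.card (PresentedGroup (cycRels m ρ σ)) = (ρ ^ m - σ ^ m).natAbs ∧
    ∀ i : ZMod m,
      Subgroup.zpowers (PresentedGroup.of (rels := cycRels m ρ σ) i) = ⊤ := by
  refine ⟨?_, ?_, fun i => CycAux.zpowers_top hm hρσ i⟩
  · exact ⟨⟨PresentedGroup.of (rels := cycRels m ρ σ) 0, fun a => by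
      show a ∈ Subgroup.zpowers _
      rw [CycAux.zpowers_top hm hρσ 0]; trivial⟩⟩
  · have hb : Function.Bijective (CycAux.phi (m := m) (ρ := ρ) (σ := σ) hm) :=
      ⟨CycAux.phi_inj hm hρσ, CycAux.phi_surj hm hρσ⟩
    rw [Nat.card_eq_of_bijective _ hb, Nat.card_congr Multiplicative.toAdd, Nat.card_zmod]
end

section
/- Given integers m ≥ 1, ρ, σ, α with (ρ,σ) = 1 and (m,α) = 1, the group M = ⟨u,v | v^m, u^ρ v^α u^{-σ} v^{-α}⟩ is a split metacyclic group ⟨u⟩ ⋊ ⟨v⟩ with cyclic normal subgroup ⟨u⟩ ≅ Z_{|ρ^m−σ^m|} and complement ⟨v⟩ ≅ Z_m. -/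
/-- The relators of the group `M = ⟨u,v | v^m, u^ρ v^α u^{-σ} v^{-α}⟩`,
where `u` is indexed by `true` and `v` by `false`. -/
def Mrels (m : ℕ) (ρ σ α : ℤ) : Set (FreeGroup Bool) :=
  {FreeGroup.of false ^ (m : ℤ),
   FreeGroup.of true ^ ρ * FreeGroup.of false ^ α *
     FreeGroup.of true ^ (-σ) * FreeGroup.of false ^ (-α)}


section GroupCalc
variable {G : Type*} [Group G]

private lemma conj_zpow' (g x : G) (k : ℤ) : g * x ^ k * g⁻¹ = (g * x * g⁻¹) ^ k := by
  have := map_zpow (MulAut.conj g) x k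
  simpa [MulAut.conj_apply] using this.symm

private lemma conj_iter (u v : G) (a T : ℤ)
    (h : v ^ a * u * (v ^ a)⁻¹ = u ^ T) :
    ∀ j : ℕ, v ^ (a * j) * u * (v ^ (a * j))⁻¹ = u ^ (T ^ j) := by
  intro j
  induction j with
  | zero => simp
  | succ j ih =>
    have h1 : v ^ (a * ((j:ℤ) + 1)) = v ^ (a * j) * v ^ a := by
      rw [← zpow_add]; ring_nf
    have key : v ^ (a*j) * (v ^ a * u * (v ^ a)⁻¹) * (v ^ (a*j))⁻¹ = u ^ (T ^ (j+1)) := by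
      rw [h, conj_zpow', ih, ← zpow_mul]
      congr 1
      exact (pow_succ T j).symm
    calc v ^ (a * ((j:ℕ)+1 : ℕ)) * u * (v ^ (a * ((j:ℕ)+1:ℕ)))⁻¹
        = v ^ (a*j) * (v ^ a * u * (v ^ a)⁻¹) * (v ^ (a*j))⁻¹ := by
          push_cast [h1, mul_inv_rev]; group
      _ = u ^ (T ^ (j+1)) := key

private lemma conj_iter_pow (u v : G) (a s t : ℤ)
    (h : v ^ a * u ^ s * (v ^ a)⁻¹ = u ^ t) :
    ∀ j : ℕ, v ^ (a * j) * u ^ (s ^ j) * (v ^ (a * j))⁻¹ = u ^ (t ^ j) := by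
  intro j
  induction j with
  | zero => simp
  | succ j ih =>
    have h1 : v ^ (a * ((j:ℤ) + 1)) = v ^ (a * j) * v ^ a := by
      rw [← zpow_add]; ring_nf
    have inner : v ^ a * u ^ (s ^ (j+1)) * (v ^ a)⁻¹ = u ^ (t * s ^ j) := by
      have e0 : u ^ (s ^ (j+1) : ℤ) = (u ^ s) ^ ((s:ℤ) ^ j) := by
        rw [← zpow_mul]; congr 1; rw [pow_succ]; ring
      rw [e0, conj_zpow', h, ← zpow_mul]
    have outer : v ^ (a*j) * u ^ (t * s ^ j) * (v ^ (a*j))⁻¹ = u ^ (t ^ (j+1)) := by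
      have e1 : u ^ (t * s ^ j : ℤ) = (u ^ (s ^ j : ℤ)) ^ t := by
        rw [← zpow_mul]; congr 1; ring
      rw [e1, conj_zpow', ih, ← zpow_mul]
      congr 1
      exact (pow_succ t j).symm
    calc v ^ (a * ((j:ℕ)+1 : ℕ)) * u ^ (s ^ ((j:ℕ)+1:ℕ)) * (v ^ (a * ((j:ℕ)+1:ℕ)))⁻¹
        = v ^ (a*j) * (v ^ a * u ^ (s^(j+1)) * (v ^ a)⁻¹) * (v ^ (a*j))⁻¹ := by
          push_cast [h1, mul_inv_rev]; group
      _ = v ^ (a*j) * u ^ (t * s ^ j) * (v ^ (a*j))⁻¹ := by rw [inner]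
      _ = u ^ (t ^ (j+1)) := outer

private lemma main_calc (u v : G) (m : ℕ) (hm : 1 ≤ m) (ρ σ α d k : ℤ) (β : ℕ)
    (hd : (ρ ^ m - σ ^ m) ∣ σ * d - 1) (hβ : α * β = 1 + (m : ℤ) * k)
    (hv : v ^ (m : ℤ) = 1) (hr : v ^ α * u ^ σ * (v ^ α)⁻¹ = u ^ ρ) :
    u ^ (ρ ^ m - σ ^ m) = 1 ∧ v * u * v⁻¹ = u ^ ((ρ * d) ^ β) ∧
      v⁻¹ * u * v = u ^ (((ρ * d) ^ β) ^ (m - 1)) := by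
  have g2 := conj_iter_pow u v α σ ρ hr m
  have hvm : v ^ (α * (m : ℤ)) = 1 := by
    rw [mul_comm, zpow_mul, hv, one_zpow]
  rw [hvm] at g2
  have huN : u ^ (ρ ^ m - σ ^ m : ℤ) = 1 := by
    have h5 : u ^ ((σ:ℤ) ^ m) = u ^ ((ρ:ℤ) ^ m) := by simpa using g2
    rw [zpow_sub, ← h5, mul_inv_cancel]
  obtain ⟨e, he⟩ := hd
  have hσd : u ^ (σ * d) = u := by
    have h6 : σ * d = 1 + (ρ ^ m - σ ^ m) * e := by linarith
    rw [h6, zpow_add, zpow_one, zpow_mul, huN, one_zpow, mul_one]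
  have g5 : v ^ α * u * (v ^ α)⁻¹ = u ^ (ρ * d) := by
    conv_lhs => rw [← hσd]
    rw [zpow_mul, conj_zpow', hr, ← zpow_mul]
  have g6 := conj_iter u v α (ρ * d) g5 β
  have hvβ : v ^ (α * (β : ℤ)) = v := by
    rw [hβ, zpow_add, zpow_one, zpow_mul, hv, one_zpow, mul_one]
  rw [hvβ] at g6
  refine ⟨huN, g6, ?_⟩
  have g7 := conj_iter u v 1 ((ρ * d) ^ β) (by simpa using g6) (m - 1)
  have hvm1 : v ^ ((1 : ℤ) * ((m - 1 : ℕ) : ℤ)) = v⁻¹ := by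
    rw [one_mul]
    have h7 : ((m - 1 : ℕ) : ℤ) = (m : ℤ) - 1 := by
      have := Nat.cast_sub hm (R := ℤ); simpa using this
    rw [h7, zpow_sub, hv, zpow_one, one_mul]
  rw [hvm1, inv_inv] at g7
  exact g7

end GroupCalc

private lemma arith_wit (m : ℕ) (hm : 1 ≤ m) (ρ σ α : ℤ)
    (hρσ : Int.gcd ρ σ = 1) (hmα : Int.gcd (m : ℤ) α = 1) :
    ∃ (d k : ℤ) (β : ℕ), (ρ ^ m - σ ^ m) ∣ σ * d - 1 ∧ α * β = 1 + (m : ℤ) * k := by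
  have hcop : IsCoprime σ ρ := (Int.isCoprime_iff_gcd_eq_one.mpr hρσ).symm
  have h1 : IsCoprime σ (ρ ^ m) := hcop.pow_right
  have h2 : IsCoprime σ (ρ ^ m - σ ^ m) := by
    have hσm : σ ^ m = σ * σ ^ (m - 1) := by
      rw [← pow_succ']; congr 1; omega
    have e : ρ ^ m - σ ^ m = ρ ^ m + σ * (-(σ ^ (m - 1))) := by rw [hσm]; ring
    rw [e]
    exact h1.add_mul_left_right _
  obtain ⟨x, y, hxy⟩ := h2
  have hcm : IsCoprime (m : ℤ) α := Int.isCoprime_iff_gcd_eq_one.mpr hmα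
  obtain ⟨x2, y2, hx2⟩ := hcm
  have hmne : (m : ℤ) ≠ 0 := by positivity
  have hβ0 : 0 ≤ y2 % (m : ℤ) := Int.emod_nonneg y2 hmne
  refine ⟨x, -x2 - α * (y2 / (m : ℤ)), (y2 % (m : ℤ)).toNat, ⟨-y, by linarith⟩, ?_⟩
  rw [Int.toNat_of_nonneg hβ0, Int.emod_def]
  linear_combination hx2

private lemma transPerm_zpow (n : ℕ) (z : ℤ) :
    ((MulAction.toPermHom (Multiplicative (ZMod n)) (ZMod n)) (Multiplicative.ofAdd 1)) ^ z =
      (MulAction.toPermHom (Multiplicative (ZMod n)) (ZMod n)) (Multiplicative.ofAdd ((z : ZMod n))) := by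
  rw [← map_zpow, ← ofAdd_zsmul, Int.smul_one_eq_cast]

private lemma orderOf_transPerm (n : ℕ) :
    orderOf ((MulAction.toPermHom (Multiplicative (ZMod n)) (ZMod n)) (Multiplicative.ofAdd 1)) = n := by
  set X := (MulAction.toPermHom (Multiplicative (ZMod n)) (ZMod n)) (Multiplicative.ofAdd (1 : ZMod n)) with hX
  have key : ∀ z : ℤ, X ^ z = 1 ↔ ((z : ZMod n) = 0) := by
    intro z
    constructor
    · intro h
      have h0 : (z : ZMod n) + 0 = (0 : ZMod n) :=
        congrArg (fun (e : Equiv.Perm (ZMod n)) => e 0) ((transPerm_zpow n z).symm.trans h)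
      simpa using h0
    · intro h
      rw [transPerm_zpow, h]
      simp only [ofAdd_zero, map_one]
  apply Nat.dvd_antisymm
  · apply orderOf_dvd_of_pow_eq_one
    have h1 := (key (n : ℤ)).mpr (by push_cast; simp)
    rwa [zpow_natCast] at h1
  · have h1 : X ^ ((orderOf X : ℤ)) = 1 := by rw [zpow_natCast]; exact pow_orderOf_eq_one X
    have h2 := (key _).mp h1
    rwa [Int.cast_natCast, ZMod.natCast_eq_zero_iff] at h2

private lemma exists_permV (n m : ℕ) (hm : 1 ≤ m) (ρ σ α t k : ℤ) (β : ℕ)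
    (hβ : α * (β : ℤ) = 1 + (m : ℤ) * k)
    (htm : ((t : ZMod n)) ^ m = 1)
    (hρt : (σ : ZMod n) * (t : ZMod n) = (ρ : ZMod n)) :
    ∃ V : Equiv.Perm (ZMod n), V ^ (m : ℤ) = 1 ∧
      ((MulAction.toPermHom (Multiplicative (ZMod n)) (ZMod n)) (Multiplicative.ofAdd 1)) ^ ρ *
      V ^ α *
      ((MulAction.toPermHom (Multiplicative (ZMod n)) (ZMod n)) (Multiplicative.ofAdd 1)) ^ (-σ) *
      V ^ (-α) = 1 := by
  set τ : ZMod n := (t : ZMod n) with hτ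
  have hm1 : m - 1 + 1 = m := by omega
  have pf1 : τ * τ ^ (m - 1) = 1 := by rw [← pow_succ', hm1, htm]
  have pf2 : τ ^ (m - 1) * τ = 1 := by rw [← pow_succ, hm1, htm]
  set w : (ZMod n)ˣ := ⟨τ, τ ^ (m - 1), pf1, pf2⟩ with hw
  have hwm : w ^ m = 1 := by
    ext
    push_cast [Units.val_pow_eq_pow_val]
    exact htm
  set Φv := MulAction.toPermHom (ZMod n)ˣ (ZMod n) with hΦv
  refine ⟨Φv (w ^ β), ?_, ?_⟩
  · rw [← map_zpow, zpow_natCast, ← pow_mul, mul_comm, pow_mul, hwm, one_pow, map_one]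
  · have hrα : (w ^ β : (ZMod n)ˣ) ^ (α : ℤ) = w := by
      rw [← zpow_natCast w β, ← zpow_mul, mul_comm, hβ, zpow_add, zpow_one, zpow_mul,
        zpow_natCast, hwm, one_zpow, mul_one]
    have hVα : (Φv (w ^ β)) ^ (α : ℤ) = Φv w := by rw [← map_zpow, hrα]
    have hVnα : (Φv (w ^ β)) ^ (-α : ℤ) = Φv w⁻¹ := by
      rw [zpow_neg, hVα, ← map_inv]
    rw [hVα, hVnα, transPerm_zpow, transPerm_zpow]
    ext x
    simp only [Equiv.Perm.mul_apply]
    show ((ρ : ℤ) : ZMod n) + ((w : ZMod n) * ((((-σ : ℤ) : ZMod n)) + ((w⁻¹ : (ZMod n)ˣ) : ZMod n) * x)) = x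
    have hw1 : (w : ZMod n) * ((w⁻¹ : (ZMod n)ˣ) : ZMod n) = 1 := by
      rw [← Units.val_mul, mul_inv_cancel, Units.val_one]
    push_cast
    linear_combination (-1 : ZMod n) * hρt + x * hw1


/-- with `(ρ,σ) = 1` and `(m,α) = 1`, the group
`M = ⟨u,v | v^m, u^ρ v^α u^{-σ} v^{-α}⟩` is split metacyclic of the form `⟨u⟩ ⋊ ⟨v⟩`,
with cyclic normal subgroup `⟨u⟩ ≅ ℤ_{|ρ^m-σ^m|}` and complement `⟨v⟩ ≅ ℤ_m`. -/
theorem stmt_1 (m : ℕ) (hm : 1 ≤ m) (ρ σ α : ℤ)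
    (hρσ : Int.gcd ρ σ = 1) (hmα : Int.gcd (m : ℤ) α = 1) :
    (Subgroup.zpowers (PresentedGroup.of (rels := Mrels m ρ σ α) true)).Normal ∧
    Subgroup.zpowers (PresentedGroup.of (rels := Mrels m ρ σ α) true) ⊔
      Subgroup.zpowers (PresentedGroup.of (rels := Mrels m ρ σ α) false) = ⊤ ∧
    Subgroup.zpowers (PresentedGroup.of (rels := Mrels m ρ σ α) true) ⊓
      Subgroup.zpowers (PresentedGroup.of (rels := Mrels m ρ σ α) false) = ⊥ ∧
    Nat.card (Subgroup.zpowers (PresentedGroup.of (rels := Mrels m ρ σ α) true)) =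
      (ρ ^ m - σ ^ m).natAbs ∧
    Nat.card (Subgroup.zpowers (PresentedGroup.of (rels := Mrels m ρ σ α) false)) = m := by
  obtain ⟨d, k, β, hd, hβ⟩ := arith_wit m hm ρ σ α hρσ hmα
  set n := (ρ ^ m - σ ^ m).natAbs with hn
  set U := PresentedGroup.of (rels := Mrels m ρ σ α) true with hU
  set V := PresentedGroup.of (rels := Mrels m ρ σ α) false with hV
  have hv : V ^ (m : ℤ) = 1 := by
    have h : (PresentedGroup.mk (Mrels m ρ σ α)) (FreeGroup.of false ^ (m:ℤ)) = 1 :=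
      (QuotientGroup.eq_one_iff _).2 (Subgroup.subset_normalClosure (Or.inl rfl))
    rw [map_zpow] at h
    exact h
  have hrel : U ^ ρ * V ^ α * U ^ (-σ) * V ^ (-α) = 1 := by
    have h : (PresentedGroup.mk (Mrels m ρ σ α)) (FreeGroup.of true ^ ρ * FreeGroup.of false ^ α *
        FreeGroup.of true ^ (-σ) * FreeGroup.of false ^ (-α)) = 1 :=
      (QuotientGroup.eq_one_iff _).2 (Subgroup.subset_normalClosure (Or.inr rfl))
    rw [map_mul, map_mul, map_mul, map_zpow, map_zpow, map_zpow, map_zpow] at h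
    exact h
  have hr : V ^ α * U ^ σ * (V ^ α)⁻¹ = U ^ ρ := by
    have h2 : U ^ ρ = (V ^ α * U ^ (-σ) * V ^ (-α))⁻¹ := by
      rw [eq_inv_iff_mul_eq_one]
      simpa [mul_assoc] using hrel
    rw [h2]
    group
  obtain ⟨huN, hT, hT'⟩ := main_calc U V m hm ρ σ α d k β hd hβ hv hr
  -- φ₂
  have h₂ : ∀ r ∈ Mrels m ρ σ α,
      FreeGroup.lift (fun b => if b then (1 : Multiplicative (ZMod m))
        else Multiplicative.ofAdd 1) r = 1 := by
    intro r hrm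
    rcases hrm with rfl | rfl
    · rw [map_zpow, FreeGroup.lift_apply_of]
      simp only [Bool.false_eq_true, if_false]
      rw [← ofAdd_zsmul, Int.smul_one_eq_cast]
      push_cast
      simp
    · simp only [map_mul, map_zpow, FreeGroup.lift_apply_of, if_true, Bool.false_eq_true, if_false]
      rw [one_zpow, one_zpow, one_mul, mul_one, ← zpow_add, add_neg_cancel, zpow_zero]
  set φ₂ := PresentedGroup.toGroup h₂ with hφ₂
  have φ₂U : φ₂ U = 1 := by
    rw [hU, hφ₂]
    simpa using PresentedGroup.toGroup.of h₂
  have φ₂V : φ₂ V = Multiplicative.ofAdd (1 : ZMod m) := by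
    rw [hV, hφ₂]
    simpa using PresentedGroup.toGroup.of h₂
  -- arithmetic facts mod n
  have hnd : ((n : ℤ)) ∣ (ρ ^ m - σ ^ m) := Int.natAbs_dvd.mpr dvd_rfl
  have hNdvd1 : (ρ ^ m - σ ^ m) ∣ (ρ * d) ^ m - 1 := by
    have h3 : (ρ ^ m - σ ^ m) ∣ (σ * d) ^ m - 1 :=
      hd.trans (by simpa using sub_dvd_pow_sub_pow (σ * d) 1 m)
    have heq : (ρ * d) ^ m - 1 = d ^ m * (ρ ^ m - σ ^ m) + ((σ * d) ^ m - 1) := by ring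
    rw [heq]
    exact dvd_add (dvd_mul_left _ _) h3
  have htm : ((ρ * d : ℤ) : ZMod n) ^ m = 1 := by
    have h4 : (((ρ * d) ^ m - 1 : ℤ) : ZMod n) = 0 :=
      (ZMod.intCast_zmod_eq_zero_iff_dvd _ _).2 (hnd.trans hNdvd1)
    push_cast at h4
    have := sub_eq_zero.mp h4
    push_cast
    exact this
  have hρt : ((σ : ℤ) : ZMod n) * ((ρ * d : ℤ) : ZMod n) = ((ρ : ℤ) : ZMod n) := by
    have hdv : (n : ℤ) ∣ σ * (ρ * d) - ρ :=
      hnd.trans (by rw [show σ * (ρ * d) - ρ = ρ * (σ * d - 1) by ring]; exact hd.mul_left ρ)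
    have h4 : ((σ * (ρ * d) - ρ : ℤ) : ZMod n) = 0 := (ZMod.intCast_zmod_eq_zero_iff_dvd _ _).2 hdv
    push_cast at h4
    have := sub_eq_zero.mp h4
    push_cast
    linear_combination this
  obtain ⟨Vp, hVp1, hVp2⟩ := exists_permV n m hm ρ σ α (ρ * d) k β hβ htm hρt
  have h₁ : ∀ r ∈ Mrels m ρ σ α,
      FreeGroup.lift (fun b => if b then
        (MulAction.toPermHom (Multiplicative (ZMod n)) (ZMod n)) (Multiplicative.ofAdd 1)
        else Vp) r = 1 := by
    intro r hrm
    rcases hrm with rfl | rfl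
    · rw [map_zpow, FreeGroup.lift_apply_of]
      simpa using hVp1
    · simp only [map_mul, map_zpow, FreeGroup.lift_apply_of, if_true, Bool.false_eq_true, if_false]
      exact hVp2
  set φ₁ := PresentedGroup.toGroup h₁ with hφ₁
  have φ₁U : φ₁ U = (MulAction.toPermHom (Multiplicative (ZMod n)) (ZMod n))
      (Multiplicative.ofAdd 1) := by
    rw [hU, hφ₁]
    simpa using PresentedGroup.toGroup.of h₁
  -- orders
  have hUn : U ^ ((n : ℕ) : ℤ) = 1 := by
    rcases Int.natAbs_eq (ρ ^ m - σ ^ m) with h | h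
    · rw [hn, ← h]
      exact huN
    · have h8 : ((n : ℕ) : ℤ) = -(ρ ^ m - σ ^ m) := by rw [hn]; omega
      rw [h8, zpow_neg, huN, inv_one]
  have hordU : orderOf U = n := by
    apply Nat.dvd_antisymm
    · apply orderOf_dvd_of_pow_eq_one
      rw [← zpow_natCast]
      exact hUn
    · have h9 := orderOf_map_dvd φ₁ U
      rwa [φ₁U, orderOf_transPerm] at h9
  have hordV : orderOf V = m := by
    apply Nat.dvd_antisymm
    · apply orderOf_dvd_of_pow_eq_one
      rw [← zpow_natCast]
      exact hv
    · have h9 := orderOf_map_dvd φ₂ V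
      rwa [φ₂V, orderOf_ofAdd_eq_addOrderOf, ZMod.addOrderOf_one] at h9
  refine ⟨?_, ?_, ?_, ?_, ?_⟩
  · -- Normal
    rw [← Subgroup.normalizer_eq_top_iff, eq_top_iff,
      ← PresentedGroup.closure_range_of (Mrels m ρ σ α), Subgroup.closure_le]
    rintro g ⟨b, rfl⟩
    cases b
    · -- false : V
      simp only [SetLike.mem_coe]
      rw [Subgroup.mem_normalizer_iff]
      intro h
      constructor
      · intro hmem
        obtain ⟨kk, rfl⟩ := Subgroup.mem_zpowers_iff.mp hmem
        have h10 : V * U ^ kk * V⁻¹ = U ^ ((ρ * d) ^ β * kk) := by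
          rw [conj_zpow', hT, ← zpow_mul]
        rw [h10]
        exact Subgroup.mem_zpowers_iff.mpr ⟨_, rfl⟩
      · intro hmem
        obtain ⟨kk, hkk⟩ := Subgroup.mem_zpowers_iff.mp hmem
        have hh : h = V⁻¹ * U ^ kk * V := by rw [hkk, hV]; group
        have h11 : V⁻¹ * U ^ kk * V = U ^ ((((ρ * d) ^ β) ^ (m - 1)) * kk) := by
          have := conj_zpow' V⁻¹ U kk
          rw [inv_inv] at this
          rw [this, hT', ← zpow_mul]
        rw [hh, h11]
        exact Subgroup.mem_zpowers_iff.mpr ⟨_, rfl⟩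
    · -- true : U
      exact Subgroup.le_normalizer (Subgroup.mem_zpowers U)
  · -- sup
    rw [eq_top_iff, ← PresentedGroup.closure_range_of (Mrels m ρ σ α), Subgroup.closure_le]
    rintro g ⟨b, rfl⟩
    cases b
    · exact SetLike.mem_coe.mpr (Subgroup.mem_sup_right (Subgroup.mem_zpowers _))
    · exact SetLike.mem_coe.mpr (Subgroup.mem_sup_left (Subgroup.mem_zpowers _))
  · -- inf
    rw [eq_bot_iff]
    intro x hx
    obtain ⟨a, ha⟩ := Subgroup.mem_zpowers_iff.mp hx.1
    obtain ⟨b, hb⟩ := Subgroup.mem_zpowers_iff.mp hx.2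
    have h1 : φ₂ x = 1 := by rw [← ha, map_zpow, φ₂U, one_zpow]
    have h2 : Multiplicative.ofAdd ((b : ZMod m)) = 1 := by
      rw [← hb, map_zpow, φ₂V, ← ofAdd_zsmul, Int.smul_one_eq_cast] at h1
      exact h1
    have h3 : ((b : ℤ) : ZMod m) = 0 := by
      simpa using h2
    obtain ⟨c, rfl⟩ := (ZMod.intCast_zmod_eq_zero_iff_dvd _ _).1 h3
    rw [Subgroup.mem_bot, ← hb, zpow_mul, hv, one_zpow]
  · rw [Nat.card_zpowers]
    exact hordU
  · rw [Nat.card_zpowers]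
    exact hordV
end

section
/- Given integers m ≥ 1, ρ, σ, α with (ρ,σ) = 1 and (m,α) = 1, the group M = ⟨u,v | v^m, u^ρ v^α u^{-σ} v^{-α}⟩ is finite if and only if ρ^m ≠ σ^m. -/
open Pointwise

lemma addRight_zpow (k : ℤ) : ∀ x : ℤ,
    ((Equiv.addRight (1:ℤ) : Equiv.Perm ℤ) ^ k) x = x + k := by
  induction k using Int.induction_on with
  | zero => simp
  | succ n ih =>
    intro x
    rw [zpow_add_one, Equiv.Perm.mul_apply, Equiv.coe_addRight, ih]
    ring
  | pred n ih =>
    intro x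
    rw [zpow_sub_one, Equiv.Perm.mul_apply]
    have h' : ((Equiv.addRight (1:ℤ) : Equiv.Perm ℤ))⁻¹ x = x - 1 := rfl
    rw [h', ih]
    ring

lemma not_finorder_addRight : ¬ IsOfFinOrder (Equiv.addRight (1:ℤ) : Equiv.Perm ℤ) := by
  intro h
  obtain ⟨n, hn, hpow⟩ := isOfFinOrder_iff_pow_eq_one.1 h
  have := congrArg (fun f : Equiv.Perm ℤ => f 0) hpow
  simp only [← zpow_natCast] at this
  rw [addRight_zpow] at this
  simp at this
  omega

lemma neg_zpow_odd {t : ℤ} (ht : Odd t) :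
    (Equiv.neg ℤ : Equiv.Perm ℤ) ^ t = Equiv.neg ℤ := by
  obtain ⟨k, rfl⟩ := ht
  have h2 : (Equiv.neg ℤ : Equiv.Perm ℤ) ^ (2:ℤ) = 1 := by
    ext x; simp [zpow_two, pow_two]
  rw [zpow_add, zpow_mul, h2, one_zpow, one_mul, zpow_one]

lemma neg_zpow_even {t : ℤ} (ht : Even t) :
    (Equiv.neg ℤ : Equiv.Perm ℤ) ^ t = 1 := by
  obtain ⟨k, rfl⟩ := ht
  have h2 : (Equiv.neg ℤ : Equiv.Perm ℤ) ^ (2:ℤ) = 1 := by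
    ext x; simp [zpow_two, pow_two]
  rw [show k+k = 2*k by ring, zpow_mul, h2, one_zpow]

lemma not_finorder_ofAdd : ¬ IsOfFinOrder (Multiplicative.ofAdd (1:ℤ)) := by
  intro h
  obtain ⟨n, hn, hpow⟩ := isOfFinOrder_iff_pow_eq_one.1 h
  simp [← ofAdd_nsmul] at hpow
  omega

lemma no_fin {rels : Set (FreeGroup Bool)} {G : Type} [Group G] {f : Bool → G}
    (h : ∀ r ∈ rels, FreeGroup.lift f r = 1) (hf : ¬ IsOfFinOrder (f true))
    (hfin : Finite (PresentedGroup rels)) : False := by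
  have := (PresentedGroup.toGroup h).isOfFinOrder
      (isOfFinOrder_of_finite (PresentedGroup.of true))
  rw [PresentedGroup.toGroup.of] at this
  exact hf this

lemma infinite_dir (m : ℕ) (hm : 1 ≤ m) (ρ σ α : ℤ) (hρσ : Int.gcd ρ σ = 1)
    (hmα : Int.gcd (m:ℤ) α = 1) (heq : ρ ^ m = σ ^ m) :
    ¬ Finite (PresentedGroup (Mrels m ρ σ α)) := by
  intro hfin
  -- |ρ| = |σ| = 1
  have habs : ρ.natAbs = σ.natAbs := by
    apply Nat.pow_left_injective (by omega : m ≠ 0)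
    simp only
    rw [← Int.natAbs_pow, ← Int.natAbs_pow, heq]
  have hone : ρ.natAbs = 1 := by
    have : Int.gcd ρ σ = ρ.natAbs := by
      rw [Int.gcd, habs, Nat.gcd_self]
    omega
  have hσone : σ.natAbs = 1 := habs ▸ hone
  by_cases hcase : ρ = σ
  · -- map to Multiplicative ℤ
    set f : Bool → Multiplicative ℤ := fun b => if b then Multiplicative.ofAdd (1:ℤ) else 1 with hf
    have h : ∀ r ∈ Mrels m ρ σ α, FreeGroup.lift f r = 1 := by
      intro r hr
      rcases hr with rfl | rfl
      · simp [hf]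
      · subst hcase
        simp only [map_mul, map_zpow, FreeGroup.lift_apply_of, hf, Bool.false_eq_true, if_false,
          if_true, one_zpow, mul_one, one_mul]
        rw [← zpow_add, add_neg_cancel, zpow_zero]
    exact no_fin h (by simp [hf]; exact not_finorder_ofAdd) hfin
  · -- then σ = -ρ
    have hρ1 := Int.natAbs_eq_iff.1 hone
    have hσ1 := Int.natAbs_eq_iff.1 hσone
    have hσρ : σ = -ρ := by omega
    subst hσρ
    have hρ0 : ρ ≠ 0 := by omega
    -- m even
    have hmeven : Even m := by
      by_contra hodd
      have hoddm : Odd m := Nat.not_even_iff_odd.1 hodd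
      rw [Odd.neg_pow hoddm] at heq
      have : ρ ^ m = 0 := by omega
      exact pow_ne_zero m hρ0 this
    -- α odd
    have hαodd : Odd α := by
      rcases Int.even_or_odd α with he | ho
      · exfalso
        have h2 : 2 ∣ Int.gcd (m:ℤ) α := by
          apply Nat.dvd_gcd
          · simpa using hmeven.two_dvd
          · have : (2:ℤ) ∣ α := he.two_dvd
            omega
        omega
      · exact ho
    set f : Bool → Equiv.Perm ℤ :=
      fun b => if b then (Equiv.addRight (1:ℤ)) else Equiv.neg ℤ with hf
    have h : ∀ r ∈ Mrels m ρ (-ρ) α, FreeGroup.lift f r = 1 := by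
      intro r hr
      rcases hr with rfl | rfl
      · simp only [map_zpow, FreeGroup.lift_apply_of, hf, Bool.false_eq_true, if_false]
        exact neg_zpow_even (by exact_mod_cast hmeven.natCast)
      · simp only [map_mul, map_zpow, FreeGroup.lift_apply_of, hf, Bool.false_eq_true, if_false, if_true]
        rw [neg_neg, neg_zpow_odd hαodd, neg_zpow_odd hαodd.neg]
        ext x
        simp only [Equiv.Perm.mul_apply, Equiv.neg_apply, addRight_zpow,
          Equiv.Perm.one_apply]
        ring
    exact no_fin h (by simp [hf]; exact not_finorder_addRight) hfin


lemma conj_zpow_eq {G : Type*} [Group G] {x y z : G} (h : x⁻¹ * y * x = z) (n : ℤ) :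
    x⁻¹ * y ^ n * x = z ^ n := by
  have hc := conj_zpow (i := n) (a := x⁻¹) (b := y)
  rw [inv_inv] at hc
  rw [← hc, h]

lemma finite_dir (m : ℕ) (hm : 1 ≤ m) (ρ σ α : ℤ) (hρσ : Int.gcd ρ σ = 1)
    (hmα : Int.gcd (m:ℤ) α = 1) (hne : ρ ^ m ≠ σ ^ m) :
    Finite (PresentedGroup (Mrels m ρ σ α)) := by
  set M := PresentedGroup (Mrels m ρ σ α) with hM
  set U : M := PresentedGroup.of true with hU
  set V : M := PresentedGroup.of false with hV
  set W : M := V ^ α with hW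
  -- relators hold
  have hVm : V ^ (m:ℤ) = 1 := by
    have h1 : PresentedGroup.mk (Mrels m ρ σ α) (FreeGroup.of false ^ (m:ℤ)) = 1 :=
      (QuotientGroup.eq_one_iff _).2 (Subgroup.subset_normalClosure (Set.mem_insert _ _))
    rw [map_zpow] at h1
    exact h1
  have hrel : U ^ ρ * W * U ^ (-σ) * W⁻¹ = 1 := by
    have h1 : PresentedGroup.mk (Mrels m ρ σ α) (FreeGroup.of true ^ ρ * FreeGroup.of false ^ α *
        FreeGroup.of true ^ (-σ) * FreeGroup.of false ^ (-α)) = 1 :=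
      (QuotientGroup.eq_one_iff _).2
        (Subgroup.subset_normalClosure (Set.mem_insert_of_mem _ rfl))
    rw [map_mul, map_mul, map_mul, map_zpow, map_zpow, map_zpow, map_zpow] at h1
    rw [hW, ← zpow_neg V α]
    exact h1
  have hconj : W⁻¹ * U ^ ρ * W = U ^ σ := by
    rw [zpow_neg] at hrel
    calc W⁻¹ * U ^ ρ * W
        = W⁻¹ * (U ^ ρ * W * (U ^ σ)⁻¹ * W⁻¹) * (W * U ^ σ) := by group
      _ = U ^ σ := by rw [hrel]; group
  have hW1 : W ^ (m:ℤ) = 1 := by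
    rw [hW, ← zpow_mul, mul_comm, zpow_mul, hVm, one_zpow]
  -- iterate the conjugation relation
  have hA : ∀ k : ℕ, (W ^ (k:ℤ))⁻¹ * U ^ (ρ ^ k) * W ^ (k:ℤ) = U ^ (σ ^ k) := by
    intro k
    induction k with
    | zero => simp
    | succ n ih =>
      have step1 : (W ^ (n:ℤ))⁻¹ * U ^ (ρ ^ (n+1)) * W ^ (n:ℤ) = U ^ (ρ * σ ^ n) := by
        have h2 := conj_zpow_eq ih ρ
        rw [← zpow_mul U (ρ ^ n) ρ, ← zpow_mul U (σ ^ n) ρ,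
          show ρ ^ n * ρ = ρ ^ (n+1) by ring,
          show σ ^ n * ρ = ρ * σ ^ n by ring] at h2
        exact h2
      have step2 : W⁻¹ * U ^ (ρ * σ ^ n) * W = U ^ (σ ^ (n+1)) := by
        have h2 := conj_zpow_eq hconj (σ ^ n)
        rw [← zpow_mul U ρ (σ ^ n), ← zpow_mul U σ (σ ^ n),
          show σ * σ ^ n = σ ^ (n+1) by ring] at h2
        exact h2
      calc (W ^ ((n+1 : ℕ):ℤ))⁻¹ * U ^ (ρ ^ (n+1)) * W ^ ((n+1 : ℕ):ℤ)
          = W⁻¹ * ((W ^ (n:ℤ))⁻¹ * U ^ (ρ ^ (n+1)) * W ^ (n:ℤ)) * W := by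
            push_cast
            rw [zpow_add_one]
            group
        _ = W⁻¹ * U ^ (ρ * σ ^ n) * W := by rw [step1]
        _ = U ^ (σ ^ (n+1)) := step2
  -- U has finite order
  set e : ℤ := ρ ^ m - σ ^ m with he'
  have he : e ≠ 0 := sub_ne_zero.2 hne
  have hUe : U ^ e = 1 := by
    have h2 := hA m
    rw [hW1, inv_one, one_mul, mul_one] at h2
    rw [he', zpow_sub, h2, mul_inv_cancel]
  have hUebj : ∀ b : ℤ, (U ^ e) ^ b = 1 := fun b => by rw [hUe, one_zpow]
  -- coprimality facts
  obtain ⟨m', rfl⟩ : ∃ m', m = m' + 1 := ⟨m - 1, by omega⟩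
  have hcρσ : IsCoprime ρ σ := Int.isCoprime_iff_gcd_eq_one.2 hρσ
  have hcρe : IsCoprime ρ e := by
    have h2 := ((hcρσ.pow_right (n := m'+1)).neg_right).add_mul_left_right (ρ ^ m')
    have h3 : -σ ^ (m'+1) + ρ * ρ ^ m' = e := by rw [he']; ring
    rwa [h3] at h2
  have hcσe : IsCoprime σ e := by
    have h2 := (hcρσ.symm.pow_right (n := m'+1)).add_mul_left_right (-(σ ^ m'))
    have h3 : ρ ^ (m'+1) + σ * -σ ^ m' = e := by rw [he']; ring
    rwa [h3] at h2
  obtain ⟨a, b, hab⟩ := hcρe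
  obtain ⟨c, d, hcd⟩ := hcσe
  -- conjugation by W sends U into ⟨U⟩, in both directions
  have hWU : W⁻¹ * U * W = U ^ (σ * a) := by
    have hU1 : U ^ (ρ * a) = U := by
      calc U ^ (ρ * a) = U ^ (a * ρ) * ((U ^ e) ^ b) := by
            rw [hUebj, mul_one, mul_comm ρ a]
        _ = U ^ (a * ρ + e * b) := by rw [← zpow_mul, ← zpow_add]
        _ = U ^ (1:ℤ) := by rw [show a * ρ + e * b = 1 by linarith [hab]]
        _ = U := zpow_one U
    calc W⁻¹ * U * W = W⁻¹ * (U ^ ρ) ^ a * W := by rw [← zpow_mul, hU1]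
      _ = (U ^ σ) ^ a := conj_zpow_eq hconj a
      _ = U ^ (σ * a) := by rw [← zpow_mul]
  have hconj' : W * U ^ σ * W⁻¹ = U ^ ρ := by rw [← hconj]; group
  have hWU' : W * U * W⁻¹ = U ^ (ρ * c) := by
    have hU1 : U ^ (σ * c) = U := by
      calc U ^ (σ * c) = U ^ (c * σ) * ((U ^ e) ^ d) := by
            rw [hUebj, mul_one, mul_comm σ c]
        _ = U ^ (c * σ + e * d) := by rw [← zpow_mul, ← zpow_add]
        _ = U ^ (1:ℤ) := by rw [show c * σ + e * d = 1 by linarith [hcd]]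
        _ = U := zpow_one U
    have h2 := conj_zpow (i := c) (a := W) (b := U ^ σ)
    rw [hconj'] at h2
    calc W * U * W⁻¹ = W * (U ^ σ) ^ c * W⁻¹ := by rw [← zpow_mul, hU1]
      _ = (U ^ ρ) ^ c := h2.symm
      _ = U ^ (ρ * c) := by rw [← zpow_mul]
  -- conjugation by arbitrary powers of W
  have hN : ∀ i : ℤ, ∀ j : ℤ, ∃ j' : ℤ, W ^ i * U ^ j * (W ^ i)⁻¹ = U ^ j' := by
    intro i
    induction i using Int.induction_on with
    | zero => exact fun j => ⟨j, by simp⟩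
    | succ n ih =>
      intro j
      have hWj : W * U ^ j * W⁻¹ = U ^ (ρ * c * j) := by
        have h2 := conj_zpow (i := j) (a := W) (b := U)
        rw [hWU'] at h2
        rw [← h2, ← zpow_mul]
      obtain ⟨j', hj'⟩ := ih (ρ * c * j)
      refine ⟨j', ?_⟩
      calc W ^ ((n:ℤ)+1) * U ^ j * (W ^ ((n:ℤ)+1))⁻¹
          = W ^ (n:ℤ) * (W * U ^ j * W⁻¹) * (W ^ (n:ℤ))⁻¹ := by
            rw [zpow_add_one]; group
        _ = W ^ (n:ℤ) * U ^ (ρ * c * j) * (W ^ (n:ℤ))⁻¹ := by rw [hWj]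
        _ = U ^ j' := hj'
    | pred n ih =>
      intro j
      have hWj : W⁻¹ * U ^ j * W = U ^ (σ * a * j) := by
        have h2 := conj_zpow_eq hWU j
        rw [← zpow_mul] at h2
        exact h2
      obtain ⟨j', hj'⟩ := ih (σ * a * j)
      refine ⟨j', ?_⟩
      calc W ^ (-(n:ℤ)-1) * U ^ j * (W ^ (-(n:ℤ)-1))⁻¹
          = W ^ (-(n:ℤ)) * (W⁻¹ * U ^ j * W) * (W ^ (-(n:ℤ)))⁻¹ := by
            rw [zpow_sub_one]; group
        _ = W ^ (-(n:ℤ)) * U ^ (σ * a * j) * (W ^ (-(n:ℤ)))⁻¹ := by rw [hWj]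
        _ = U ^ j' := hj'
  -- V is a power of W
  obtain ⟨p, q, hpq⟩ : IsCoprime ((m'+1 : ℕ) : ℤ) α := Int.isCoprime_iff_gcd_eq_one.2 hmα
  have hVW : V = W ^ q := by
    calc V = V ^ (((m'+1:ℕ):ℤ) * p) * V ^ (α * q) := by
          rw [← zpow_add, show ((m'+1:ℕ):ℤ) * p + α * q = 1 by linarith [hpq], zpow_one]
      _ = (V ^ ((m'+1:ℕ):ℤ)) ^ p * (V ^ α) ^ q := by rw [← zpow_mul, ← zpow_mul]
      _ = W ^ q := by rw [hVm, one_zpow, one_mul, ← hW]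
  have hNV : ∀ i j : ℤ, ∃ j' : ℤ, V ^ i * U ^ j * (V ^ i)⁻¹ = U ^ j' := by
    intro i j
    have h2 : V ^ i = W ^ (q * i) := by rw [hVW, ← zpow_mul]
    rw [h2]
    exact hN (q * i) j
  -- every element is V^i * U^j
  have key : ∀ x : M, ∃ i j : ℤ, x = V ^ i * U ^ j := by
    intro x
    refine PresentedGroup.generated_by _
      ⟨⟨⟨{x : M | ∃ i j : ℤ, x = V ^ i * U ^ j}, ?_⟩, ?_⟩, ?_⟩ ?_ x
    · rintro x y ⟨i, j, rfl⟩ ⟨k, l, rfl⟩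
      obtain ⟨j', hj'⟩ := hNV (-k) j
      rw [zpow_neg, inv_inv] at hj'
      refine ⟨i + k, j' + l, ?_⟩
      have h3 : U ^ j * V ^ k = V ^ k * U ^ j' := by
        calc U ^ j * V ^ k = V ^ k * ((V ^ k)⁻¹ * U ^ j * V ^ k) := by group
          _ = V ^ k * U ^ j' := by rw [hj']
      calc V ^ i * U ^ j * (V ^ k * U ^ l)
          = V ^ i * (U ^ j * V ^ k) * U ^ l := by group
        _ = V ^ i * (V ^ k * U ^ j') * U ^ l := by rw [h3]
        _ = V ^ (i + k) * U ^ (j' + l) := by rw [zpow_add, zpow_add]; group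
    · exact ⟨0, 0, by simp⟩
    · rintro x ⟨i, j, rfl⟩
      obtain ⟨j', hj'⟩ := hNV i (-j)
      refine ⟨-i, j', ?_⟩
      calc (V ^ i * U ^ j)⁻¹ = V ^ (-i) * (V ^ i * U ^ (-j) * (V ^ i)⁻¹) := by
            rw [zpow_neg, zpow_neg]; group
        _ = V ^ (-i) * U ^ j' := by rw [hj']
    · intro b
      cases b
      · exact ⟨1, 0, by simp [hV]⟩
      · exact ⟨0, 1, by simp [hU]⟩
  -- conclude finiteness
  have hUfin : IsOfFinOrder U := by
    refine isOfFinOrder_iff_pow_eq_one.2 ⟨e.natAbs, Int.natAbs_pos.2 he, ?_⟩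
    rcases Int.natAbs_eq e with h' | h'
    · rw [← zpow_natCast, ← h', hUe]
    · rw [← zpow_natCast, show ((e.natAbs:ℤ)) = -e by omega, zpow_neg, hUe, inv_one]
  have hVfin : IsOfFinOrder V := by
    refine isOfFinOrder_iff_pow_eq_one.2 ⟨m' + 1, by omega, ?_⟩
    rw [← zpow_natCast]
    exact hVm
  have hsub : (Set.univ : Set M) ⊆
      (Subgroup.zpowers V : Set M) * (Subgroup.zpowers U : Set M) := by
    intro x _
    obtain ⟨i, j, rfl⟩ := key x
    exact Set.mul_mem_mul (Subgroup.mem_zpowers_iff.2 ⟨i, rfl⟩)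
      (Subgroup.mem_zpowers_iff.2 ⟨j, rfl⟩)
  have hfin : (Set.univ : Set M).Finite :=
    Set.Finite.subset (Set.Finite.mul hVfin.finite_zpowers hUfin.finite_zpowers) hsub
  exact Set.finite_univ_iff.1 hfin


/-- with `(ρ,σ) = 1` and `(m,α) = 1`, the group
`M = ⟨u,v | v^m, u^ρ v^α u^{-σ} v^{-α}⟩` is finite if and only if `ρ^m ≠ σ^m`. -/
theorem stmt_2 (m : ℕ) (hm : 1 ≤ m) (ρ σ α : ℤ)
    (hρσ : Int.gcd ρ σ = 1) (hmα : Int.gcd (m : ℤ) α = 1) :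
    Finite (PresentedGroup (Mrels m ρ σ α)) ↔ ρ ^ m ≠ σ ^ m := by
  constructor
  · intro hfin heq
    exact infinite_dir m hm ρ σ α hρσ hmα heq hfin
  · exact finite_dir m hm ρ σ α hρσ hmα
end

section
/- Given integers m ≥ 1, ρ, σ, α with (ρ,σ) = 1, (m,α) = 1 and ρ^m = σ^m, either ρ = σ = ±1, in which case M = ⟨u,v | v^m, u^ρ v^α u^{-σ} v^{-α}⟩ is isomorphic to Z × Z_m, or ρ = −σ = ±1 and m is even, in which case M ≅ Z ⋊ Z_m (with the Z_m-action inverting Z via an odd power). -/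
open Multiplicative

lemma conj_comm_sq {G : Type*} [Group G] {w u : G} (h : w * u * w⁻¹ = u⁻¹) :
    Commute (w ^ (2:ℤ)) u := by
  have hu' : w * u⁻¹ * w⁻¹ = u := by
    calc w * u⁻¹ * w⁻¹ = (w * u * w⁻¹)⁻¹ := by group
      _ = u⁻¹⁻¹ := by rw [h]
      _ = u := inv_inv u
  have h2 : w ^ (2:ℤ) = w * w := zpow_two w
  rw [h2]
  show w * w * u = u * (w * w)
  calc w * w * u = w * (w * u * w⁻¹) * w := by group
    _ = w * u⁻¹ * w := by rw [h]
    _ = (w * u⁻¹ * w⁻¹) * (w * w) := by group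
    _ = u * (w * w) := by rw [hu']

lemma conj_zpow_odd {G : Type*} [Group G] {w u : G} (h : w * u * w⁻¹ = u⁻¹) {k : ℤ}
    (hk : Odd k) : w ^ k * u * (w ^ k)⁻¹ = u⁻¹ := by
  obtain ⟨t, rfl⟩ := hk
  have hc := ((conj_comm_sq h).zpow_left t).inv_right
  have hw : w ^ (2*t+1) = (w ^ (2:ℤ)) ^ t * w := by
    rw [← zpow_mul, ← zpow_add_one]
  rw [hw]
  calc (w ^ (2:ℤ)) ^ t * w * u * ((w ^ (2:ℤ)) ^ t * w)⁻¹
      = (w ^ (2:ℤ)) ^ t * (w * u * w⁻¹) * ((w ^ (2:ℤ)) ^ t)⁻¹ := by group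
    _ = (w ^ (2:ℤ)) ^ t * u⁻¹ * ((w ^ (2:ℤ)) ^ t)⁻¹ := by rw [h]
    _ = u⁻¹ := by rw [hc.eq]; group

lemma conj_zpow_even {G : Type*} [Group G] {w u : G} (h : w * u * w⁻¹ = u⁻¹) {k : ℤ}
    (hk : Even k) : w ^ k * u * (w ^ k)⁻¹ = u := by
  obtain ⟨t, rfl⟩ := hk
  have hc := (conj_comm_sq h).zpow_left t
  have hw : w ^ (t+t) = (w ^ (2:ℤ)) ^ t := by rw [← zpow_mul, two_mul]
  rw [hw, hc.eq]; group

section basic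
variable (m : ℕ) (ρ σ α : ℤ)

lemma mk_rels_eq_one : ∀ r ∈ Mrels m ρ σ α, PresentedGroup.mk (Mrels m ρ σ α) r = 1 := by
  intro r hr
  exact (QuotientGroup.eq_one_iff r).mpr (Subgroup.subset_normalClosure hr)

lemma hVm : (PresentedGroup.of false : PresentedGroup (Mrels m ρ σ α)) ^ (m:ℤ) = 1 := by
  have := mk_rels_eq_one m ρ σ α _ (Set.mem_insert _ _)
  rwa [map_zpow] at this

lemma hrel : (PresentedGroup.of true : PresentedGroup (Mrels m ρ σ α)) ^ ρ *
    PresentedGroup.of false ^ α * PresentedGroup.of true ^ (-σ) *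
    PresentedGroup.of false ^ (-α) = 1 := by
  have := mk_rels_eq_one m ρ σ α _ (Set.mem_insert_of_mem _ rfl)
  rwa [map_mul, map_mul, map_mul, map_zpow, map_zpow, map_zpow, map_zpow] at this
end basic

section vhom
variable (m : ℕ) (ρ σ α : ℤ)

/-- the hom `Multiplicative (ZMod m) →* M` sending the generator to `V`. -/
noncomputable def g₂ : Multiplicative (ZMod m) →* PresentedGroup (Mrels m ρ σ α) :=
  AddMonoidHom.toMultiplicativeLeft
    (ZMod.lift m ⟨(zmultiplesHom (Additive (PresentedGroup (Mrels m ρ σ α))))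
        (Additive.ofMul (PresentedGroup.of false)),
      by show (m : ℤ) • Additive.ofMul
              (PresentedGroup.of false : PresentedGroup (Mrels m ρ σ α)) = 0
         rw [← ofMul_zpow, hVm m ρ σ α]; rfl⟩)

lemma g₂_apply (k : ℤ) :
    g₂ m ρ σ α (ofAdd ((k : ZMod m))) = (PresentedGroup.of false) ^ k := by
  simp [g₂, AddMonoidHom.coe_toMultiplicativeLeft, ZMod.lift_coe, zmultiplesHom_apply]
end vhom

section caseA
variable (m : ℕ) (ρ α : ℤ)

open scoped commutatorElement in
lemma commUVα (m : ℕ) (ρ α : ℤ) (hρ : ρ = 1 ∨ ρ = -1) :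
    Commute (PresentedGroup.of true : PresentedGroup (Mrels m ρ ρ α))
      (PresentedGroup.of false ^ α) := by
  rcases hρ with rfl | rfl
  · have h := hrel m 1 1 α
    simp only [zpow_one, zpow_neg] at h
    have h' : ⁅(PresentedGroup.of true : PresentedGroup (Mrels m 1 1 α)),
        (PresentedGroup.of false : PresentedGroup (Mrels m 1 1 α)) ^ α⁆ = 1 := by
      rw [commutatorElement_def]
      simpa using h
    exact commutatorElement_eq_one_iff_mul_comm.mp h'
  · have h := hrel m (-1) (-1) α
    simp only [neg_neg, zpow_one, zpow_neg, zpow_neg_one] at h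
    have h' : ⁅(PresentedGroup.of true : PresentedGroup (Mrels m (-1) (-1) α))⁻¹,
        (PresentedGroup.of false : PresentedGroup (Mrels m (-1) (-1) α)) ^ α⁆ = 1 := by
      rw [commutatorElement_def]
      simpa using h
    exact Commute.inv_left_iff.mp (commutatorElement_eq_one_iff_mul_comm.mp h')

lemma isoA (hρ : ρ = 1 ∨ ρ = -1) (β γ : ℤ) (hβ : γ * m + β * α = 1) :
    Nonempty (PresentedGroup (Mrels m ρ ρ α) ≃* Multiplicative (ℤ × ZMod m)) := by
  set M := PresentedGroup (Mrels m ρ ρ α) with hM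
  set U : M := PresentedGroup.of true with hU
  set V : M := PresentedGroup.of false with hV
  have hVm' : V ^ (m:ℤ) = 1 := hVm m ρ ρ α
  have hUVα : Commute U (V ^ α) := commUVα m ρ α hρ
  have hVeq : V = (V ^ α) ^ β := by
    calc V = V ^ (γ * (m:ℤ) + β * α) := by rw [hβ, zpow_one]
      _ = V ^ ((m:ℤ) * γ) * V ^ (α * β) := by rw [← zpow_add]; congr 1; ring
      _ = (V ^ (m:ℤ)) ^ γ * (V ^ α) ^ β := by rw [zpow_mul, zpow_mul]
      _ = (V ^ α) ^ β := by rw [hVm']; group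
  have hUV : Commute U V := by rw [hVeq]; exact hUVα.zpow_right β
  -- forward hom
  have hf : ∀ r ∈ Mrels m ρ ρ α,
      FreeGroup.lift (fun x => if x then ofAdd ((1:ℤ), (0:ZMod m))
        else ofAdd ((0:ℤ), (1:ZMod m))) r = 1 := by
    intro r hr
    simp only [Mrels, Set.mem_insert_iff, Set.mem_singleton_iff] at hr
    rcases hr with rfl | rfl
    · apply Multiplicative.toAdd.injective
      simp only [map_zpow, FreeGroup.lift_apply_of, if_false, Bool.false_eq_true, toAdd_zpow,
        toAdd_ofAdd, toAdd_one]
      rw [Prod.ext_iff]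
      constructor
      · simp
      · simp [zsmul_eq_mul]
    · apply Multiplicative.toAdd.injective
      simp only [map_mul, map_zpow, FreeGroup.lift_apply_of, if_true, if_false, Bool.false_eq_true,
        toAdd_mul, toAdd_zpow, toAdd_ofAdd, toAdd_one]
      rw [Prod.ext_iff]
      constructor
      · simp
      · simp [zsmul_eq_mul]
  let f : M →* Multiplicative (ℤ × ZMod m) := PresentedGroup.toGroup hf
  have hfU : f U = ofAdd ((1:ℤ), (0:ZMod m)) := PresentedGroup.toGroup.of hf
  have hfV : f V = ofAdd ((0:ℤ), (1:ZMod m)) := PresentedGroup.toGroup.of hf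
  -- backward hom
  have hcomm2 : ∀ b : ZMod m, Commute U (g₂ m ρ ρ α (ofAdd b)) := by
    intro b
    obtain ⟨k, rfl⟩ := ZMod.intCast_surjective b
    have := g₂_apply m ρ ρ α k
    rw [this]
    exact hUV.zpow_right k
  let g : Multiplicative (ℤ × ZMod m) →* M :=
  { toFun := fun p => U ^ (toAdd p).1 * g₂ m ρ ρ α (ofAdd (toAdd p).2)
    map_one' := by simp
    map_mul' := by
      intro p q
      show U ^ ((toAdd p).1 + (toAdd q).1) *
          g₂ m ρ ρ α (ofAdd ((toAdd p).2 + (toAdd q).2)) = _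
      rw [zpow_add, ofAdd_add, map_mul]
      have hc : U ^ (toAdd q).1 * g₂ m ρ ρ α (ofAdd (toAdd p).2)
          = g₂ m ρ ρ α (ofAdd (toAdd p).2) * U ^ (toAdd q).1 :=
        ((hcomm2 (toAdd p).2).zpow_left (toAdd q).1).eq
      calc U ^ (toAdd p).1 * U ^ (toAdd q).1 *
            (g₂ m ρ ρ α (ofAdd (toAdd p).2) * g₂ m ρ ρ α (ofAdd (toAdd q).2))
          = U ^ (toAdd p).1 * (U ^ (toAdd q).1 * g₂ m ρ ρ α (ofAdd (toAdd p).2)) *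
            g₂ m ρ ρ α (ofAdd (toAdd q).2) := by group
        _ = U ^ (toAdd p).1 * (g₂ m ρ ρ α (ofAdd (toAdd p).2) * U ^ (toAdd q).1) *
            g₂ m ρ ρ α (ofAdd (toAdd q).2) := by rw [hc]
        _ = _ := by group }
  have h₁ : g.comp f = MonoidHom.id M := by
    apply PresentedGroup.ext
    intro x
    cases x
    · show g (f V) = V
      rw [hfV]
      show U ^ (0:ℤ) * g₂ m ρ ρ α (ofAdd (1 : ZMod m)) = V
      have h1 : ((1:ℤ) : ZMod m) = (1 : ZMod m) := Int.cast_one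
      rw [zpow_zero, one_mul, ← h1, g₂_apply, zpow_one]
    · show g (f U) = U
      rw [hfU]
      show U ^ (1:ℤ) * g₂ m ρ ρ α (ofAdd (0 : ZMod m)) = U
      rw [zpow_one]
      simp
  have h₂ : f.comp g = MonoidHom.id (Multiplicative (ℤ × ZMod m)) := by
    apply MonoidHom.ext
    intro p
    obtain ⟨k, hk⟩ := ZMod.intCast_surjective (toAdd p).2
    show f (U ^ (toAdd p).1 * g₂ m ρ ρ α (ofAdd (toAdd p).2)) = p
    rw [← hk, g₂_apply, map_mul, map_zpow, map_zpow, hfU, hfV]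
    rw [← ofAdd_zsmul, ← ofAdd_zsmul, ← ofAdd_add]
    have key : (toAdd p).1 • ((1:ℤ), (0:ZMod m)) + k • ((0:ℤ), (1:ZMod m)) = toAdd p := by
      rw [Prod.ext_iff]
      constructor
      · simp
      · simpa [zsmul_eq_mul] using hk
    rw [key]
    rfl
  exact ⟨MonoidHom.toMulEquiv f g h₁ h₂⟩
end caseA

section caseB

lemma conjVαU (m : ℕ) (ρ α : ℤ) (hρ : ρ = 1 ∨ ρ = -1) :
    (PresentedGroup.of false : PresentedGroup (Mrels m ρ (-ρ) α)) ^ α *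
      PresentedGroup.of true *
      ((PresentedGroup.of false : PresentedGroup (Mrels m ρ (-ρ) α)) ^ α)⁻¹ =
      (PresentedGroup.of true)⁻¹ := by
  rcases hρ with rfl | rfl
  · have h := hrel m 1 (-1) α
    rw [show (-(-1:ℤ)) = 1 from neg_neg 1] at h
    rw [zpow_one, zpow_neg] at h
    refine eq_inv_of_mul_eq_one_right ?_
    calc PresentedGroup.of true * ((PresentedGroup.of false :
            PresentedGroup (Mrels m 1 (-1) α)) ^ α * PresentedGroup.of true *
            ((PresentedGroup.of false : PresentedGroup (Mrels m 1 (-1) α)) ^ α)⁻¹)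
        = PresentedGroup.of true * PresentedGroup.of false ^ α *
            PresentedGroup.of true * (PresentedGroup.of false ^ α)⁻¹ := by group
      _ = 1 := h
  · have h := hrel m (-1) (-(-1)) α
    rw [show (-(-(-1:ℤ))) = -1 from by norm_num] at h
    rw [zpow_neg_one, zpow_neg] at h
    have h2 : (PresentedGroup.of false : PresentedGroup (Mrels m (-1) (-(-1)) α)) ^ α *
        (PresentedGroup.of true)⁻¹ *
        ((PresentedGroup.of false : PresentedGroup (Mrels m (-1) (-(-1)) α)) ^ α)⁻¹
        = ((PresentedGroup.of true)⁻¹)⁻¹ := by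
      refine eq_inv_of_mul_eq_one_right ?_
      calc (PresentedGroup.of true : PresentedGroup (Mrels m (-1) (-(-1)) α))⁻¹ *
            (PresentedGroup.of false ^ α * (PresentedGroup.of true)⁻¹ *
              (PresentedGroup.of false ^ α)⁻¹)
          = (PresentedGroup.of true)⁻¹ * PresentedGroup.of false ^ α *
              (PresentedGroup.of true)⁻¹ * (PresentedGroup.of false ^ α)⁻¹ := by group
        _ = 1 := h
    calc (PresentedGroup.of false : PresentedGroup (Mrels m (-1) (-(-1)) α)) ^ α *
          PresentedGroup.of true * (PresentedGroup.of false ^ α)⁻¹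
        = (PresentedGroup.of false ^ α * (PresentedGroup.of true)⁻¹ *
            (PresentedGroup.of false ^ α)⁻¹)⁻¹ := by group
      _ = (((PresentedGroup.of true)⁻¹)⁻¹)⁻¹ := by rw [h2]
      _ = (PresentedGroup.of true)⁻¹ := by group

/-- the inversion automorphism of `Multiplicative ℤ`. -/
noncomputable def iota : MulAut (Multiplicative ℤ) := MulEquiv.inv (Multiplicative ℤ)

lemma iota_apply (x : Multiplicative ℤ) : iota x = x⁻¹ := rfl

lemma iota_sq : iota * iota = 1 := by
  ext x
  show (iota * iota) x = x
  rw [MulAut.mul_apply, iota_apply, iota_apply, inv_inv]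

lemma iota_zpow_even {k : ℤ} (hk : Even k) : iota ^ k = 1 := by
  obtain ⟨t, rfl⟩ := hk
  have : iota ^ (t + t) = (iota ^ (2:ℤ)) ^ t := by rw [← zpow_mul, two_mul]
  rw [this, zpow_two, iota_sq, one_zpow]

lemma iota_zpow_odd {k : ℤ} (hk : Odd k) : iota ^ k = iota := by
  obtain ⟨t, rfl⟩ := hk
  have : iota ^ (2*t + 1) = (iota ^ (2:ℤ)) ^ t * iota := by
    rw [← zpow_mul, ← zpow_add_one]
  rw [this, zpow_two, iota_sq, one_zpow, one_mul]
end caseB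

section isoBsec

noncomputable def phiB (m : ℕ) (hme : Even m) :
    Multiplicative (ZMod m) →* MulAut (Multiplicative ℤ) :=
  AddMonoidHom.toMultiplicativeLeft
    (ZMod.lift m ⟨(zmultiplesHom (Additive (MulAut (Multiplicative ℤ))))
        (Additive.ofMul iota),
      by show (m : ℤ) • Additive.ofMul iota = 0
         rw [← ofMul_zpow, iota_zpow_even ((Int.even_coe_nat m).mpr hme)]
         rfl⟩)

lemma phiB_apply (m : ℕ) (hme : Even m) (k : ℤ) :
    phiB m hme (ofAdd ((k : ZMod m))) = iota ^ k := by
  simp [phiB, AddMonoidHom.coe_toMultiplicativeLeft, ZMod.lift_coe, zmultiplesHom_apply]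

lemma phiB_one (m : ℕ) (hme : Even m) (x : Multiplicative ℤ) :
    phiB m hme (ofAdd (1 : ZMod m)) x = x⁻¹ := by
  have h1 : ((1:ℤ) : ZMod m) = (1 : ZMod m) := Int.cast_one
  rw [← h1, phiB_apply, zpow_one, iota_apply]
end isoBsec

open SemidirectProduct in
lemma isoB (m : ℕ) (ρ α : ℤ) (hρ : ρ = 1 ∨ ρ = -1) (hme : Even m) (hα : Odd α)
    (β γ : ℤ) (hβ : γ * m + β * α = 1) :
    Nonempty (PresentedGroup (Mrels m ρ (-ρ) α) ≃*
      SemidirectProduct (Multiplicative ℤ) (Multiplicative (ZMod m)) (phiB m hme)) := by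
  set M := PresentedGroup (Mrels m ρ (-ρ) α) with hM
  set U : M := PresentedGroup.of true with hU
  set V : M := PresentedGroup.of false with hV
  have hVm' : V ^ (m:ℤ) = 1 := hVm m ρ (-ρ) α
  have hVαU : V ^ α * U * (V ^ α)⁻¹ = U⁻¹ := conjVαU m ρ α hρ
  -- β is odd
  have hβodd : Odd β := by
    rcases Int.even_or_odd β with ⟨t, ht⟩ | ho
    · exfalso
      obtain ⟨s, hs⟩ := hme
      have h2 : (1:ℤ) = 2 * (γ * s + t * α) := by
        rw [← hβ, ht]
        have : (m:ℤ) = 2 * s := by exact_mod_cast hs.trans (two_mul s).symm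
        rw [this]; ring
      omega
    · exact ho
  have hVeq : V = (V ^ α) ^ β := by
    calc V = V ^ (γ * (m:ℤ) + β * α) := by rw [hβ, zpow_one]
      _ = V ^ ((m:ℤ) * γ) * V ^ (α * β) := by rw [← zpow_add]; congr 1; ring
      _ = (V ^ (m:ℤ)) ^ γ * (V ^ α) ^ β := by rw [zpow_mul, zpow_mul]
      _ = (V ^ α) ^ β := by rw [hVm']; group
  have hVU : V * U * V⁻¹ = U⁻¹ := by
    rw [hVeq]
    exact conj_zpow_odd hVαU hβodd
  -- forward hom
  have hf : ∀ r ∈ Mrels m ρ (-ρ) α,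
      FreeGroup.lift (fun x => if x then (inl (ofAdd (1:ℤ)) :
          SemidirectProduct (Multiplicative ℤ) (Multiplicative (ZMod m)) (phiB m hme))
        else inr (ofAdd (1 : ZMod m))) r = 1 := by
    intro r hr
    simp only [Mrels, Set.mem_insert_iff, Set.mem_singleton_iff] at hr
    rcases hr with rfl | rfl
    · rw [map_zpow, FreeGroup.lift_apply_of, if_neg (by simp)]
      rw [← map_zpow]
      have : (ofAdd (1 : ZMod m)) ^ (m:ℤ) = 1 := by
        rw [← ofAdd_zsmul, ofAdd_eq_one]
        simp [zsmul_eq_mul]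
      rw [this, map_one]
    · rw [map_mul, map_mul, map_mul, map_zpow, map_zpow, map_zpow, map_zpow,
        FreeGroup.lift_apply_of, FreeGroup.lift_apply_of, if_pos rfl, if_neg (by simp)]
      rw [show (-(-ρ)) = ρ from neg_neg ρ]
      rw [← map_zpow inl, ← map_zpow inr, ← map_zpow inr,
        zpow_neg (ofAdd (1 : ZMod m)) α]
      have hB : (ofAdd (1 : ZMod m)) ^ α = ofAdd ((α : ZMod m)) := by
        rw [← ofAdd_zsmul]
        congr 1
        simp [zsmul_eq_mul]
      have hφB : phiB m hme (ofAdd ((α : ZMod m))) ((ofAdd (1:ℤ)) ^ ρ) =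
          ((ofAdd (1:ℤ)) ^ ρ)⁻¹ := by
        rw [phiB_apply, iota_zpow_odd hα, iota_apply]
      calc inl ((ofAdd (1:ℤ)) ^ ρ) * inr ((ofAdd (1:ZMod m)) ^ α) *
            inl ((ofAdd (1:ℤ)) ^ ρ) * inr (((ofAdd (1:ZMod m)) ^ α)⁻¹)
          = inl ((ofAdd (1:ℤ)) ^ ρ) * (inr ((ofAdd (1:ZMod m)) ^ α) *
            inl ((ofAdd (1:ℤ)) ^ ρ) * inr (((ofAdd (1:ZMod m)) ^ α)⁻¹)) := by
            group
        _ = inl ((ofAdd (1:ℤ)) ^ ρ) *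
            inl (phiB m hme ((ofAdd (1:ZMod m)) ^ α) ((ofAdd (1:ℤ)) ^ ρ)) := by
            rw [← SemidirectProduct.inl_aut]
        _ = inl ((ofAdd (1:ℤ)) ^ ρ * ((ofAdd (1:ℤ)) ^ ρ)⁻¹) := by
            rw [hB, hφB, ← map_mul]
        _ = 1 := by simp
  let f : M →* SemidirectProduct (Multiplicative ℤ) (Multiplicative (ZMod m)) (phiB m hme) :=
    PresentedGroup.toGroup hf
  have hfU : f U = inl (ofAdd (1:ℤ)) := PresentedGroup.toGroup.of hf
  have hfV : f V = inr (ofAdd (1 : ZMod m)) := PresentedGroup.toGroup.of hf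
  -- backward hom
  let f₁ : Multiplicative ℤ →* M := zpowersHom M U
  let f₂ : Multiplicative (ZMod m) →* M := g₂ m ρ (-ρ) α
  have hcompat : ∀ gg : Multiplicative (ZMod m),
      f₁.comp (phiB m hme gg).toMonoidHom = (MulAut.conj (f₂ gg)).toMonoidHom.comp f₁ := by
    intro gg
    obtain ⟨k, hk⟩ := ZMod.intCast_surjective (toAdd gg)
    have hgg : gg = ofAdd ((k : ZMod m)) := by rw [hk, ofAdd_toAdd]
    apply MonoidHom.ext_mint
    rw [hgg]
    show f₁ (phiB m hme (ofAdd ((k : ZMod m))) (ofAdd 1)) =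
      MulAut.conj (f₂ (ofAdd ((k : ZMod m)))) (f₁ (ofAdd 1))
    have hf₂ : f₂ (ofAdd ((k : ZMod m))) = V ^ k := g₂_apply m ρ (-ρ) α k
    have hf₁ : f₁ (ofAdd (1:ℤ)) = U := zpow_one U
    rw [phiB_apply, MulAut.conj_apply, hf₂, hf₁]
    rcases Int.even_or_odd k with he | ho
    · rw [iota_zpow_even he]
      show f₁ (ofAdd (1:ℤ)) = V ^ k * U * (V ^ k)⁻¹
      rw [hf₁]
      exact (conj_zpow_even hVU he).symm
    · rw [iota_zpow_odd ho]
      show f₁ ((ofAdd (1:ℤ))⁻¹) = V ^ k * U * (V ^ k)⁻¹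
      rw [map_inv, hf₁]
      exact (conj_zpow_odd hVU ho).symm
  let g : SemidirectProduct (Multiplicative ℤ) (Multiplicative (ZMod m)) (phiB m hme) →* M :=
    SemidirectProduct.lift f₁ f₂ hcompat
  have h₁ : g.comp f = MonoidHom.id M := by
    apply PresentedGroup.ext
    intro x
    cases x
    · show g (f V) = V
      rw [hfV]
      show g (inr (ofAdd (1 : ZMod m))) = V
      rw [SemidirectProduct.lift_inr]
      have h1 : ((1:ℤ) : ZMod m) = (1 : ZMod m) := Int.cast_one
      show f₂ (ofAdd (1 : ZMod m)) = V
      rw [← h1]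
      exact (g₂_apply m ρ (-ρ) α 1).trans (zpow_one V)
    · show g (f U) = U
      rw [hfU, SemidirectProduct.lift_inl]
      exact zpow_one U
  have h₂ : f.comp g = MonoidHom.id _ := by
    apply SemidirectProduct.hom_ext
    · apply MonoidHom.ext_mint
      show f (g (inl (ofAdd 1))) = inl (ofAdd 1)
      rw [SemidirectProduct.lift_inl]
      show f (U ^ (1:ℤ)) = inl (ofAdd 1)
      rw [zpow_one, hfU]
    · apply MonoidHom.ext
      intro x
      obtain ⟨k, hk⟩ := ZMod.intCast_surjective (toAdd x)
      have hx : x = ofAdd ((k : ZMod m)) := by rw [hk, ofAdd_toAdd]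
      show f (g (inr x)) = inr x
      rw [SemidirectProduct.lift_inr, hx]
      show f (f₂ (ofAdd ((k : ZMod m)))) = inr (ofAdd ((k : ZMod m)))
      rw [g₂_apply m ρ (-ρ) α k, map_zpow, hfV, ← map_zpow]
      congr 1
      rw [← ofAdd_zsmul]
      congr 1
      simp [zsmul_eq_mul]
  exact ⟨MonoidHom.toMulEquiv f g h₁ h₂⟩

/-- with `(ρ,σ) = 1`, `(m,α) = 1` and `ρ^m = σ^m`, either
`ρ = σ = ±1`, in which case `M ≅ ℤ × ℤ_m`, or `ρ = -σ = ±1` and `m` is even,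
in which case `M ≅ ℤ ⋊ ℤ_m` with the `ℤ_m`-action inverting `ℤ`. -/
theorem stmt_3 (m : ℕ) (hm : 1 ≤ m) (ρ σ α : ℤ)
    (hρσ : Int.gcd ρ σ = 1) (hmα : Int.gcd (m : ℤ) α = 1)
    (hpow : ρ ^ m = σ ^ m) :
    ((ρ = σ ∧ (ρ = 1 ∨ ρ = -1)) ∧
      Nonempty (PresentedGroup (Mrels m ρ σ α) ≃* Multiplicative (ℤ × ZMod m))) ∨
    ((ρ = -σ ∧ (ρ = 1 ∨ ρ = -1) ∧ Even m) ∧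
      ∃ φ : Multiplicative (ZMod m) →* MulAut (Multiplicative ℤ),
        (∀ x : Multiplicative ℤ, φ (Multiplicative.ofAdd (1 : ZMod m)) x = x⁻¹) ∧
        Nonempty (PresentedGroup (Mrels m ρ σ α) ≃*
          SemidirectProduct (Multiplicative ℤ) (Multiplicative (ZMod m)) φ)) := by
  have habs : ρ.natAbs = σ.natAbs := by
    have h := congrArg Int.natAbs hpow
    rw [Int.natAbs_pow, Int.natAbs_pow] at h
    exact Nat.pow_left_injective (by omega) h
  have hgcd : Int.gcd ρ σ = Nat.gcd ρ.natAbs σ.natAbs := rfl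
  have hσ1 : σ.natAbs = 1 := by
    rw [hgcd, habs, Nat.gcd_self] at hρσ
    exact hρσ
  have hρ1 : ρ.natAbs = 1 := by rw [habs]; exact hσ1
  have hρpm : ρ = 1 ∨ ρ = -1 := by omega
  obtain ⟨γ, β, hβγ⟩ := Int.isCoprime_iff_gcd_eq_one.mpr hmα
  by_cases hcase : ρ = σ
  · left
    refine ⟨⟨hcase, hρpm⟩, ?_⟩
    subst hcase
    exact isoA m ρ α hρpm β γ hβγ
  · right
    have hσρ : σ = -ρ := by omega
    have hme : Even m := by
      by_contra hodd
      have hoddm : Odd m := Nat.not_even_iff_odd.mp hodd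
      rw [hσρ, Odd.neg_pow hoddm] at hpow
      have h0 : ρ ^ m = 0 := by linarith
      have : ρ = 0 := by
        have := pow_eq_zero_iff (n := m) (by omega) |>.mp h0
        exact this
      omega
    have hαodd : Odd α := by
      rcases Int.even_or_odd α with ⟨t, ht⟩ | ho
      · exfalso
        obtain ⟨s, hs⟩ := hme
        have hm2 : (m:ℤ) = (s:ℤ) + (s:ℤ) := by exact_mod_cast hs
        have h2 : (1:ℤ) = 2 * (γ * s + β * t) := by
          rw [← hβγ, hm2, ht]; ring
        omega
      · exact ho
    subst hσρ
    exact ⟨⟨(neg_neg ρ).symm, hρpm, hme⟩, phiB m hme, phiB_one m hme,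
      isoB m ρ α hρpm hme hαodd β γ hβγ⟩
end

section
/- In the group M = ⟨u,v | v^m, u^ρ v^α u^{-σ} v^{-α}⟩ (with m ≥ 1), the element u satisfies u^{ρ^m} = u^{σ^m}, i.e. u^{ρ^m − σ^m} = 1. -/
/-- in `M = ⟨u,v | v^m, u^ρ v^α u^{-σ} v^{-α}⟩` (with `m ≥ 1`),
the element `u` satisfies `u^{ρ^m} = u^{σ^m}`, i.e. `u^{ρ^m - σ^m} = 1`. -/
theorem stmt_4 (m : ℕ) (hm : 1 ≤ m) (ρ σ α : ℤ) :
    (PresentedGroup.of (rels := Mrels m ρ σ α) true) ^ (ρ ^ m) =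
      (PresentedGroup.of (rels := Mrels m ρ σ α) true) ^ (σ ^ m) ∧
    (PresentedGroup.of (rels := Mrels m ρ σ α) true) ^ (ρ ^ m - σ ^ m) = 1 := by
  set u := PresentedGroup.of (rels := Mrels m ρ σ α) true with hu
  set v := PresentedGroup.of (rels := Mrels m ρ σ α) false with hv
  have hrel : ∀ r ∈ Mrels m ρ σ α, PresentedGroup.mk (Mrels m ρ σ α) r = 1 := by
    intro r hr
    exact (QuotientGroup.eq_one_iff r).mpr (Subgroup.subset_normalClosure hr)
  have h1 : v ^ (m : ℤ) = 1 := by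
    have := hrel _ (Set.mem_insert _ _)
    simpa [hv, PresentedGroup.of] using this
  have h2 : u ^ ρ * v ^ α * u ^ (-σ) * v ^ (-α) = 1 := by
    have := hrel _ (Set.mem_insert_iff.mpr (Or.inr rfl))
    simpa [hu, hv, PresentedGroup.of] using this
  have hc : v ^ α * u ^ σ * (v ^ α)⁻¹ = u ^ ρ := by
    have h2' : (u ^ ρ * v ^ α) * (u ^ (-σ) * v ^ (-α)) = 1 := by rw [← h2]; group
    have h3 := eq_inv_of_mul_eq_one_left h2'
    have h4 : u ^ ρ * v ^ α = v ^ α * u ^ σ := by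
      rw [h3]; simp [mul_inv_rev]
    rw [← h4]; group
  have hconj : ∀ t : ℤ, v ^ α * u ^ (σ * t) * (v ^ α)⁻¹ = u ^ (ρ * t) := by
    intro t
    calc v ^ α * u ^ (σ * t) * (v ^ α)⁻¹
        = (v ^ α * u ^ σ * (v ^ α)⁻¹) ^ t := by rw [conj_zpow, ← zpow_mul]
      _ = u ^ (ρ * t) := by rw [hc, ← zpow_mul]
  have key : ∀ k : ℕ, ∀ t : ℤ, v ^ ((k : ℤ) * α) * u ^ (σ ^ k * t) * (v ^ ((k : ℤ) * α))⁻¹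
      = u ^ (ρ ^ k * t) := by
    intro k
    induction k with
    | zero => intro t; simp
    | succ k ih =>
      intro t
      have e1 : ((k + 1 : ℕ) : ℤ) * α = (k : ℤ) * α + α := by push_cast; ring
      have e2 : σ ^ (k + 1) * t = σ * (σ ^ k * t) := by ring
      rw [e1, e2, zpow_add, mul_inv_rev]
      have rearr : v ^ ((k:ℤ) * α) * v ^ α * u ^ (σ * (σ ^ k * t)) * ((v ^ α)⁻¹ * (v ^ ((k:ℤ) * α))⁻¹)
          = v ^ ((k:ℤ) * α) * (v ^ α * u ^ (σ * (σ ^ k * t)) * (v ^ α)⁻¹) * (v ^ ((k:ℤ) * α))⁻¹ := by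
        group
      rw [rearr, hconj (σ ^ k * t)]
      have e3 : ρ * (σ ^ k * t) = σ ^ k * (ρ * t) := by ring
      have e4 : ρ ^ (k + 1) * t = ρ ^ k * (ρ * t) := by ring
      rw [e3, e4, ih (ρ * t)]
  have hvm : v ^ ((m : ℤ) * α) = 1 := by rw [zpow_mul, h1, one_zpow]
  have hmain : u ^ (ρ ^ m) = u ^ (σ ^ m) := by
    have := key m 1
    rw [hvm] at this
    simpa using this.symm
  refine ⟨hmain, ?_⟩
  rw [zpow_sub, hmain, mul_inv_cancel]
end

section
/- The group E = E(r,n,s,A) = ⟨t,y | t^n, y^r t^A y^{-s} t^{-A}⟩ is a semidirect product Γ ⋊ ⟨t⟩ where Γ is the normal closure of y in E and ⟨t⟩ is cyclic of order n; in particular Γ ∩ ⟨t⟩ = 1. -/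
/-- The relators of the group `E(r,n,s,A) = ⟨t,y | t^n, y^r t^A y^{-s} t^{-A}⟩`,
where `t` is indexed by `true` and `y` by `false`. -/
def Erels (n : ℕ) (r s A : ℤ) : Set (FreeGroup Bool) :=
  {FreeGroup.of true ^ (n : ℤ),
   FreeGroup.of false ^ r * FreeGroup.of true ^ A *
     FreeGroup.of false ^ (-s) * FreeGroup.of true ^ (-A)}

/-- `E = ⟨t,y | t^n, y^r t^A y^{-s} t^{-A}⟩` is a semidirect product
`Γ ⋊ ⟨t⟩` where `Γ` is the normal closure of `y` and `⟨t⟩` is cyclic of order `n`;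
in particular `Γ ∩ ⟨t⟩ = 1`. -/
theorem stmt_7 (n : ℕ) (hn : 0 < n) (r s A : ℤ) :
    Subgroup.normalClosure {PresentedGroup.of (rels := Erels n r s A) false} ⊔
      Subgroup.zpowers (PresentedGroup.of (rels := Erels n r s A) true) = ⊤ ∧
    Subgroup.normalClosure {PresentedGroup.of (rels := Erels n r s A) false} ⊓
      Subgroup.zpowers (PresentedGroup.of (rels := Erels n r s A) true) = ⊥ ∧
    Nat.card (Subgroup.zpowers (PresentedGroup.of (rels := Erels n r s A) true)) = n := by
  set t := PresentedGroup.of (rels := Erels n r s A) true with ht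
  set y := PresentedGroup.of (rels := Erels n r s A) false with hy
  -- homomorphism to Multiplicative (ZMod n)
  have hrels : ∀ w ∈ Erels n r s A,
      FreeGroup.lift (fun b => if b then Multiplicative.ofAdd (1 : ZMod n) else 1) w = 1 := by
    rintro w (rfl | rfl)
    · simp only [map_zpow, FreeGroup.lift_apply_of, if_true]
      rw [← ofAdd_zsmul]
      simp
    · simp [← zpow_add]
  let φ : PresentedGroup (Erels n r s A) →* Multiplicative (ZMod n) :=
    PresentedGroup.toGroup hrels
  have hφt : φ t = Multiplicative.ofAdd (1 : ZMod n) := PresentedGroup.toGroup.of hrels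
  have hφy : φ y = 1 := PresentedGroup.toGroup.of hrels
  have htn : t ^ (n : ℤ) = 1 := by
    have h1 : PresentedGroup.mk (Erels n r s A) (FreeGroup.of true ^ (n : ℤ)) = 1 :=
      (QuotientGroup.eq_one_iff _).mpr (Subgroup.subset_normalClosure (Set.mem_insert _ _))
    rwa [map_zpow] at h1
  have hordt : orderOf t = n := by
    refine Nat.dvd_antisymm (orderOf_dvd_of_pow_eq_one ?_) ?_
    · rw [← zpow_natCast]; exact htn
    · have h1 : orderOf (φ t) ∣ orderOf t := orderOf_map_dvd φ t
      rwa [hφt, orderOf_ofAdd_eq_addOrderOf, ZMod.addOrderOf_one] at h1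
  refine ⟨?_, ?_, ?_⟩
  · rw [eq_top_iff, ← PresentedGroup.closure_range_of (Erels n r s A), Subgroup.closure_le]
    rintro _ ⟨b, rfl⟩
    cases b
    · exact Subgroup.mem_sup_left (Subgroup.subset_normalClosure rfl)
    · exact Subgroup.mem_sup_right (Subgroup.mem_zpowers _)
  · rw [eq_bot_iff]
    rintro g ⟨hg1, k, rfl⟩
    have hNC : Subgroup.normalClosure {y} ≤ φ.ker :=
      Subgroup.normalClosure_le_normal (by simpa [Set.singleton_subset_iff, MonoidHom.mem_ker]
        using hφy)
    have hk : φ (t ^ k) = 1 := hNC hg1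
    rw [map_zpow, hφt] at hk
    have hk2 : ((k : ℤ) : ZMod n) = 0 := by
      have := congrArg Multiplicative.toAdd hk
      simpa [← ofAdd_zsmul] using this
    obtain ⟨m, rfl⟩ := (ZMod.intCast_zmod_eq_zero_iff_dvd k n).mp hk2
    rw [Subgroup.mem_bot]
    show t ^ ((n : ℤ) * m) = 1
    rw [zpow_mul, htn, one_zpow]
  · rw [Nat.card_zpowers, hordt]
end

section
/- In the group E = ⟨t,y | t^n, y^r t^A y^{-s} t^{-A}⟩, if y = 1 (i.e., y represents the identity element of E), then |r − s| = 1, and in particular gcd(r,s) = 1. -/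
/-- in `E = ⟨t,y | t^n, y^r t^A y^{-s} t^{-A}⟩`, if `y = 1` in `E`
then `|r - s| = 1`, and in particular `gcd(r,s) = 1`. -/
theorem stmt_8 (n : ℕ) (hn : 0 < n) (r s A : ℤ)
    (hy : PresentedGroup.of (rels := Erels n r s A) false = 1) :
    (r - s).natAbs = 1 ∧ Int.gcd r s = 1 := by
  set m : ℕ := (r - s).natAbs with hm
  -- map to Multiplicative (ZMod m), t ↦ 1, y ↦ ofAdd 1
  let f : Bool → Multiplicative (ZMod m) :=
    fun b => if b then 1 else Multiplicative.ofAdd 1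
  have hrels : ∀ g ∈ Erels n r s A, FreeGroup.lift f g = 1 := by
    intro g hg
    rcases hg with hg | hg
    · subst hg
      simp [f]
    · simp only [Set.mem_singleton_iff] at hg
      subst hg
      have : ((r - s : ℤ) : ZMod m) = 0 := by
        rw [ZMod.intCast_zmod_eq_zero_iff_dvd]
        exact Int.natAbs_dvd.mpr dvd_rfl
      simp only [map_mul, map_zpow, FreeGroup.lift_apply_of, f, Bool.false_eq_true, if_false, if_true,
        one_zpow, mul_one]
      rw [← ofAdd_zsmul, ← ofAdd_zsmul, ← ofAdd_add]
      rw [show (r • (1 : ZMod m) + (-s) • (1 : ZMod m)) = ((r - s : ℤ) : ZMod m) by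
        simp only [zsmul_eq_mul, mul_one]; push_cast; ring, this]
      rfl
  have hmain : m = 1 := by
    have := congrArg (PresentedGroup.toGroup hrels) hy
    rw [PresentedGroup.toGroup.of, map_one] at this
    simp only [f, if_false] at this
    have h1 : (1 : ZMod m) = 0 := by
      have := congrArg Multiplicative.toAdd this
      simpa using this
    have : ((1 : ℕ) : ZMod m) = 0 := by simpa using h1
    rw [ZMod.natCast_eq_zero_iff] at this
    exact Nat.dvd_one.mp this
  refine ⟨hmain, ?_⟩
  have hdvd : (Int.gcd r s : ℤ) ∣ r - s :=
    dvd_sub (Int.gcd_dvd_left r s) (Int.gcd_dvd_right r s)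
  have : Int.gcd r s ∣ m := by
    have := Int.natAbs_dvd_natAbs.mpr hdvd
    simpa [hm] using this
  rw [hmain] at this
  exact Nat.dvd_one.mp this
end

section
/- Let E = ⟨t,y | t^n, y^r t^A y^{-s} t^{-A}⟩ with n > 0, gcd(n,A) = 1, gcd(r,s) = 1 and r^n ≠ s^n. Then E is a finite metacyclic group of order n·|r^n − s^n|. -/
/-- A group is metacyclic if it has a cyclic normal subgroup with cyclic quotient. -/
def IsMetacyclic (G : Type*) [Group G] : Prop :=
  ∃ (K : Subgroup G) (hK : K.Normal),
    IsCyclic K ∧ (let _inst : K.Normal := hK; IsCyclic (G ⧸ K))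

section Chain

variable {G : Type*} [Group G]

/-- conjugates `y_i = u^{-i} y u^i`. -/
private def Yc (u y : G) (i : ℕ) : G := (MulAut.conj ((u ^ (i : ℤ))⁻¹)) y

private lemma Yc_zpow (u y : G) (i : ℕ) (k : ℤ) :
    (Yc u y i) ^ k = (MulAut.conj ((u ^ (i : ℤ))⁻¹)) (y ^ k) := by
  rw [Yc, ← map_zpow]

private lemma Yc_succ (u y : G) (r s : ℤ) (hconj : u⁻¹ * y ^ r * u = y ^ s) (i : ℕ) :
    (Yc u y i) ^ s = (Yc u y (i + 1)) ^ r := by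
  have h1 : (MulAut.conj (u⁻¹)) (y ^ r) = y ^ s := by
    simpa [MulAut.conj_apply] using hconj
  have h2 : ((u : G) ^ (i : ℤ))⁻¹ * u⁻¹ = (u ^ ((i + 1 : ℕ) : ℤ))⁻¹ := by
    rw [← mul_inv_rev]
    congr 1
    push_cast
    rw [add_comm ((i : ℤ)) 1, zpow_one_add]
  rw [Yc_zpow, Yc_zpow, ← h1, ← MulAut.mul_apply, ← map_mul, h2]

private lemma Yc_pow_M (u y : G) (M : ℤ) (hyM : y ^ M = 1) (i : ℕ) : (Yc u y i) ^ M = 1 := by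
  rw [Yc_zpow, hyM, map_one]

private lemma Yc_zpowers_mono (u y : G) (r s M : ℤ) (hconj : u⁻¹ * y ^ r * u = y ^ s)
    (hyM : y ^ M = 1) (hsM : IsCoprime s M) (i : ℕ) :
    Subgroup.zpowers (Yc u y i) ≤ Subgroup.zpowers (Yc u y (i + 1)) := by
  obtain ⟨e, f, hef⟩ := hsM
  rw [Subgroup.zpowers_le, Subgroup.mem_zpowers_iff]
  refine ⟨r * e, ?_⟩
  have h0 : Yc u y i = ((Yc u y i) ^ s) ^ e * ((Yc u y i) ^ M) ^ f := by
    rw [← zpow_mul, ← zpow_mul, ← zpow_add, mul_comm s e, mul_comm M f, hef, zpow_one]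
  rw [h0, Yc_pow_M u y M hyM, one_zpow, mul_one, Yc_succ u y r s hconj, ← zpow_mul]

private lemma Yc_zpowers_le (u y : G) (r s M : ℤ) (hconj : u⁻¹ * y ^ r * u = y ^ s)
    (hyM : y ^ M = 1) (hsM : IsCoprime s M) {i j : ℕ} (hij : i ≤ j) :
    Subgroup.zpowers (Yc u y i) ≤ Subgroup.zpowers (Yc u y j) := by
  induction j, hij using Nat.le_induction with
  | base => exact le_rfl
  | succ j hj ih => exact ih.trans (Yc_zpowers_mono u y r s M hconj hyM hsM j)

private lemma Yc_zero (u y : G) : Yc u y 0 = y := by simp [Yc]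

private lemma Yc_n (u y : G) (n : ℕ) (hun : u ^ (n : ℤ) = 1) : Yc u y n = y := by
  simp [Yc, hun]

/-- All the zpowers subgroups in the cycle coincide with `zpowers y`. -/
private lemma Yc_zpowers_eq (u y : G) (n : ℕ) (r s M : ℤ) (hconj : u⁻¹ * y ^ r * u = y ^ s)
    (hyM : y ^ M = 1) (hsM : IsCoprime s M) (hun : u ^ (n : ℤ) = 1) {i : ℕ} (hi : i ≤ n) :
    Subgroup.zpowers (Yc u y i) = Subgroup.zpowers y := by
  refine le_antisymm ?_ ?_
  · have h2 := Yc_zpowers_le u y r s M hconj hyM hsM hi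
    rwa [Yc_n u y n hun] at h2
  · have h1 := Yc_zpowers_le u y r s M hconj hyM hsM (Nat.zero_le i)
    rwa [Yc_zero] at h1

end Chain

private lemma Yc_chain_pow {G : Type*} [Group G] (u y : G) (r s : ℤ)
    (hconj : u⁻¹ * y ^ r * u = y ^ s) (i : ℕ) :
    y ^ (s ^ i) = (Yc u y i) ^ (r ^ i) := by
  induction i with
  | zero => simp [Yc_zero]
  | succ i ih =>
      have h1 : y ^ (s ^ (i+1)) = (y ^ (s ^ i)) ^ s := by
        rw [← zpow_mul, ← pow_succ]
      rw [h1, ih, ← zpow_mul, mul_comm, zpow_mul, Yc_succ u y r s hconj, ← zpow_mul,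
        ← pow_succ']

private def unitsMulAut (R : Type*) [Semiring R] : Rˣ →* MulAut (Multiplicative R) where
  toFun w := AddEquiv.toMultiplicative (AddAut.mulLeft w)
  map_one' := by
    ext x
    show ((1 : Rˣ) : R) * Multiplicative.toAdd x = Multiplicative.toAdd x
    rw [Units.val_one, one_mul]
  map_mul' a b := by
    ext x
    show ((a * b : Rˣ) : R) * Multiplicative.toAdd x = (a : R) * ((b : R) * Multiplicative.toAdd x)
    rw [Units.val_mul, mul_assoc]

private lemma unitsMulAut_apply {R : Type*} [Semiring R] (w : Rˣ) (x : R) :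
    unitsMulAut R w (Multiplicative.ofAdd x) = Multiplicative.ofAdd ((w : R) * x) := rfl

private def dpowHom (n : ℕ) {B : Type*} [Group B] (d : B) (hd : d ^ (n : ℤ) = 1) :
    Multiplicative (ZMod n) →* B :=
  AddMonoidHom.toMultiplicativeLeft
    (ZMod.lift n ⟨(zmultiplesHom (Additive B)) (Additive.ofMul d), by
      show (n : ℤ) • Additive.ofMul d = 0
      rw [← ofMul_zpow, hd]; rfl⟩)

private lemma dpowHom_apply (n : ℕ) {B : Type*} [Group B] (d : B) (hd : d ^ (n : ℤ) = 1)
    (k : ℤ) :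
    dpowHom n d hd (Multiplicative.ofAdd ((k : ZMod n))) = d ^ k := by
  simp [dpowHom, AddMonoidHom.coe_toMultiplicativeLeft, ZMod.lift_coe]

private lemma stmt13_lower (n : ℕ) (hn : 0 < n) (r s A : ℤ)
    (hnA : Int.gcd (n : ℤ) A = 1) (hrs : Int.gcd r s = 1) (hpow : r ^ n ≠ s ^ n)
    [Finite (PresentedGroup (Erels n r s A))] :
    n * (r ^ n - s ^ n).natAbs ≤ Nat.card (PresentedGroup (Erels n r s A)) := by
  set M : ℤ := r ^ n - s ^ n with hMdef
  have hM0 : M ≠ 0 := sub_ne_zero.mpr hpow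
  set m : ℕ := M.natAbs with hmdef
  have hm0 : m ≠ 0 := Int.natAbs_ne_zero.mpr hM0
  haveI : NeZero m := ⟨hm0⟩
  haveI : NeZero n := ⟨hn.ne'⟩
  have hMcast : ((M : ℤ) : ZMod m) = 0 :=
    (ZMod.intCast_zmod_eq_zero_iff_dvd M m).mpr (Int.natAbs_dvd.mpr dvd_rfl)
  have hrsC : IsCoprime r s := Int.isCoprime_iff_gcd_eq_one.mpr hrs
  obtain ⟨n', hn'⟩ : ∃ n', n = n' + 1 := ⟨n - 1, (Nat.succ_pred_eq_of_pos hn).symm⟩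
  have hsM : IsCoprime s M := by
    have h1 : IsCoprime s (r ^ (n' + 1)) := hrsC.symm.pow_right
    have h2 := h1.add_mul_left_right (-(s ^ n'))
    have h3 : r ^ (n' + 1) + s * -s ^ n' = M := by rw [hMdef, hn']; ring
    rwa [h3] at h2
  have hrM : IsCoprime r M := by
    have h1 : IsCoprime r (-(s ^ (n' + 1))) := (hrsC.pow_right).neg_right
    have h2 := h1.add_mul_left_right (r ^ n')
    have h3 : -s ^ (n' + 1) + r * r ^ n' = M := by rw [hMdef, hn']; ring
    rwa [h3] at h2
  have hsUnit : IsUnit ((s : ZMod m)) := by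
    have h := hsM.map (Int.castRingHom (ZMod m))
    simp only [Int.coe_castRingHom] at h
    rw [hMcast] at h
    exact isCoprime_zero_right.mp h
  have hrUnit : IsUnit ((r : ZMod m)) := by
    have h := hrM.map (Int.castRingHom (ZMod m))
    simp only [Int.coe_castRingHom] at h
    rw [hMcast] at h
    exact isCoprime_zero_right.mp h
  have hsr_pow : ((s : ZMod m)) ^ n = ((r : ZMod m)) ^ n := by
    have h1 : ((r : ZMod m)) ^ n - ((s : ZMod m)) ^ n = 0 := by
      have h2 := hMcast
      rw [hMdef] at h2
      push_cast at h2
      exact h2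
    exact (sub_eq_zero.mp h1).symm
  obtain ⟨su, hsu⟩ := hsUnit
  obtain ⟨ru, hru⟩ := hrUnit
  have hsu_ru : su ^ n = ru ^ n := by
    ext
    rw [Units.val_pow_eq_pow_val, Units.val_pow_eq_pow_val, hsu, hru, hsr_pow]
  set qu := ru * su⁻¹ with hqudef
  have hqun : qu ^ n = 1 := by
    have h1 : qu ^ n = ru ^ n * (su ^ n)⁻¹ := by rw [hqudef, mul_pow, inv_pow]
    rw [h1, hsu_ru, mul_inv_cancel]
  have hq_s : (qu : ZMod m) * (s : ZMod m) = (r : ZMod m) := by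
    have h1 : qu * su = ru := by rw [hqudef, mul_assoc, inv_mul_cancel, mul_one]
    have h2 : (↑(qu * su) : ZMod m) = (ru : ZMod m) := by rw [h1]
    rw [Units.val_mul, hsu] at h2
    exact h2.trans hru
  obtain ⟨c, e, hce⟩ := Int.isCoprime_iff_gcd_eq_one.mpr hnA
  set d := qu ^ e with hddef
  have hqun' : qu ^ (n : ℤ) = 1 := by rw [zpow_natCast, hqun]
  have hd_n : d ^ (n : ℤ) = 1 := by
    rw [hddef, ← zpow_mul, mul_comm, zpow_mul, hqun', one_zpow]
  have hd_A : d ^ A = qu := by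
    rw [hddef, ← zpow_mul]
    have hAe : e * A = 1 - (n : ℤ) * c := by linear_combination hce
    rw [hAe, zpow_sub, zpow_one, zpow_mul, hqun', one_zpow]
    rw [inv_one, mul_one]
  -- the model group
  set φd := (unitsMulAut (ZMod m)).comp (dpowHom n d hd_n) with hφdef
  set Tg : Multiplicative (ZMod m) ⋊[φd] Multiplicative (ZMod n) :=
    SemidirectProduct.inr (Multiplicative.ofAdd (1 : ZMod n)) with hTgdef
  set Yg : Multiplicative (ZMod m) ⋊[φd] Multiplicative (ZMod n) :=
    SemidirectProduct.inl (Multiplicative.ofAdd (1 : ZMod m)) with hYgdef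
  have hofAddm : ∀ k : ℤ, (Multiplicative.ofAdd (1 : ZMod m)) ^ k =
      Multiplicative.ofAdd ((k : ZMod m)) := by
    intro k
    rw [← ofAdd_toAdd ((Multiplicative.ofAdd (1 : ZMod m)) ^ k), toAdd_zpow, toAdd_ofAdd,
      zsmul_eq_mul, mul_one]
  have hofAddn : ∀ k : ℤ, (Multiplicative.ofAdd (1 : ZMod n)) ^ k =
      Multiplicative.ofAdd ((k : ZMod n)) := by
    intro k
    rw [← ofAdd_toAdd ((Multiplicative.ofAdd (1 : ZMod n)) ^ k), toAdd_zpow, toAdd_ofAdd,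
      zsmul_eq_mul, mul_one]
  have hYg : ∀ k : ℤ, Yg ^ k = SemidirectProduct.inl (Multiplicative.ofAdd ((k : ZMod m))) := by
    intro k
    rw [hYgdef, ← map_zpow, hofAddm]
  have hTg : ∀ k : ℤ, Tg ^ k = SemidirectProduct.inr (Multiplicative.ofAdd ((k : ZMod n))) := by
    intro k
    rw [hTgdef, ← map_zpow, hofAddn]
  have hφ_eval : ∀ (k : ℤ) (x : ZMod m),
      φd (Multiplicative.ofAdd ((k : ZMod n))) (Multiplicative.ofAdd x) =
        Multiplicative.ofAdd (((d ^ k : (ZMod m)ˣ) : ZMod m) * x) := by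
    intro k x
    rw [hφdef, MonoidHom.comp_apply, dpowHom_apply, unitsMulAut_apply]
  have hf : ∀ w ∈ Erels n r s A,
      (FreeGroup.lift (fun b => if b then Tg else Yg)) w = 1 := by
    intro w hw
    rcases hw with rfl | rfl
    · rw [map_zpow, FreeGroup.lift_apply_of, if_pos rfl, hTg]
      norm_num
    · rw [map_mul, map_mul, map_mul, map_zpow, map_zpow, map_zpow, map_zpow,
        FreeGroup.lift_apply_of, FreeGroup.lift_apply_of, if_pos rfl, if_neg (by simp)]
      rw [hYg r, hYg (-s), hTg A, hTg (-A)]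
      have hinrinv : SemidirectProduct.inr (φ := φd)
            (Multiplicative.ofAdd (((-A : ℤ) : ZMod n))) =
          (SemidirectProduct.inr (Multiplicative.ofAdd (((A : ℤ) : ZMod n))))⁻¹ := by
        rw [← map_inv, ← ofAdd_neg]
        norm_cast
      rw [hinrinv, mul_assoc, mul_assoc, ← mul_assoc (SemidirectProduct.inr _),
        ← map_inv, ← SemidirectProduct.inl_aut, ← map_mul]
      have hval : (Multiplicative.ofAdd ((r : ZMod m))) *
          (φd (Multiplicative.ofAdd (((A : ℤ) : ZMod n)))
            (Multiplicative.ofAdd (((-s : ℤ) : ZMod m)))) = 1 := by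
        rw [hφ_eval A, hd_A, ← ofAdd_add]
        have : (r : ZMod m) + (qu : ZMod m) * ((-s : ℤ) : ZMod m) = 0 := by
          push_cast
          rw [mul_neg, hq_s]
          ring
        rw [this, ofAdd_zero]
      rw [hval, map_one]
  set ψ := PresentedGroup.toGroup hf with hψdef
  have hψt : ψ (PresentedGroup.of true) = Tg := by
    rw [hψdef, PresentedGroup.toGroup.of, if_pos rfl]
  have hψy : ψ (PresentedGroup.of false) = Yg := by
    rw [hψdef, PresentedGroup.toGroup.of, if_neg (by simp)]
  have hsurj : Function.Surjective ψ := by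
    intro g
    refine ⟨PresentedGroup.of false ^ ((Multiplicative.toAdd g.left).val) *
            PresentedGroup.of true ^ ((Multiplicative.toAdd g.right).val), ?_⟩
    rw [map_mul, map_pow, map_pow, hψt, hψy]
    have h3 : Yg ^ (Multiplicative.toAdd g.left).val = SemidirectProduct.inl g.left := by
      rw [← zpow_natCast Yg, hYg]
      congr 1
      rw [Int.cast_natCast, ZMod.natCast_rightInverse _, ofAdd_toAdd]
    have h4 : Tg ^ (Multiplicative.toAdd g.right).val = SemidirectProduct.inr g.right := by
      rw [← zpow_natCast Tg, hTg]
      congr 1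
      rw [Int.cast_natCast, ZMod.natCast_rightInverse _, ofAdd_toAdd]
    rw [h3, h4, SemidirectProduct.inl_left_mul_inr_right]
  have hcardG : Nat.card (Multiplicative (ZMod m) ⋊[φd] Multiplicative (ZMod n)) = m * n := by
    have e : (Multiplicative (ZMod m) ⋊[φd] Multiplicative (ZMod n)) ≃
        Multiplicative (ZMod m) × Multiplicative (ZMod n) :=
      ⟨fun g => (g.left, g.right), fun p => ⟨p.1, p.2⟩, fun g => by cases g; rfl, fun p => rfl⟩
    rw [Nat.card_congr e, Nat.card_prod, Nat.card_congr (Multiplicative.toAdd (α := ZMod m)),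
      Nat.card_congr (Multiplicative.toAdd (α := ZMod n)), Nat.card_zmod, Nat.card_zmod]
  calc n * m = Nat.card (Multiplicative (ZMod m) ⋊[φd] Multiplicative (ZMod n)) := by
        rw [hcardG, Nat.mul_comm]
    _ ≤ Nat.card (PresentedGroup (Erels n r s A)) :=
        Nat.card_le_card_of_surjective ψ hsurj



/-- with `n > 0`, `gcd(n,A) = 1`, `gcd(r,s) = 1` and `r^n ≠ s^n`,
the group `E = ⟨t,y | t^n, y^r t^A y^{-s} t^{-A}⟩` is a finite metacyclic group of
order `n·|r^n - s^n|`. -/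
theorem stmt_13 (n : ℕ) (hn : 0 < n) (r s A : ℤ)
    (hnA : Int.gcd (n : ℤ) A = 1) (hrs : Int.gcd r s = 1) (hpow : r ^ n ≠ s ^ n) :
    Finite (PresentedGroup (Erels n r s A)) ∧
    Nat.card (PresentedGroup (Erels n r s A)) = n * (r ^ n - s ^ n).natAbs ∧
    IsMetacyclic (PresentedGroup (Erels n r s A)) := by
  set M : ℤ := r ^ n - s ^ n with hMdef
  have hM0 : M ≠ 0 := sub_ne_zero.mpr hpow
  -- relations in the presented group
  have hmk : ∀ w ∈ Erels n r s A, PresentedGroup.mk (Erels n r s A) w = 1 := fun w hw =>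
    (QuotientGroup.eq_one_iff _).mpr (Subgroup.subset_normalClosure hw)
  set t : PresentedGroup (Erels n r s A) := PresentedGroup.of true with htdef
  set y : PresentedGroup (Erels n r s A) := PresentedGroup.of false with hydef
  have ht : t ^ (n : ℤ) = 1 := by
    have h := hmk _ (Set.mem_insert _ _)
    rw [map_zpow] at h
    exact h
  have hrel : y ^ r * t ^ A * y ^ (-s) * t ^ (-A) = 1 := by
    have h := hmk _ (Set.mem_insert_of_mem _ rfl)
    rw [map_mul, map_mul, map_mul, map_zpow, map_zpow, map_zpow, map_zpow] at h
    exact h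
  set u : PresentedGroup (Erels n r s A) := t ^ A with hudef
  have hconj : u⁻¹ * y ^ r * u = y ^ s := by
    have h2 : y ^ r * u * (y ^ s)⁻¹ * u⁻¹ = 1 := by
      rw [← zpow_neg, ← zpow_neg]; exact hrel
    have h3 : y ^ r * u * (y ^ s)⁻¹ = u := by
      have := mul_eq_one_iff_eq_inv.mp h2
      simpa using this
    have h4 : y ^ r * u = u * y ^ s := by
      rw [mul_inv_eq_iff_eq_mul] at h3
      exact h3
    rw [mul_assoc, h4, ← mul_assoc, inv_mul_cancel, one_mul]
  have hun : u ^ (n : ℤ) = 1 := by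
    rw [hudef, ← zpow_mul, mul_comm, zpow_mul, ht, one_zpow]
  -- order of y
  have hyM : y ^ M = 1 := by
    have h1 := Yc_chain_pow u y r s hconj n
    rw [Yc_n u y n hun] at h1
    rw [hMdef, zpow_sub]
    exact div_eq_one.mpr h1.symm
  -- coprimality facts
  have hrsC : IsCoprime r s := Int.isCoprime_iff_gcd_eq_one.mpr hrs
  have hsM : IsCoprime s M := by
    obtain ⟨n', hn'⟩ : ∃ n', n = n' + 1 := ⟨n - 1, (Nat.succ_pred_eq_of_pos hn).symm⟩
    have h1 : IsCoprime s (r ^ (n' + 1)) := hrsC.symm.pow_right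
    have h2 := h1.add_mul_left_right (-(s ^ n'))
    have h3 : r ^ (n' + 1) + s * -s ^ n' = M := by rw [hMdef, hn']; ring
    rwa [h3] at h2
  -- the cyclic normal subgroup
  set N := Subgroup.zpowers y with hNdef
  have hNeq : ∀ i ≤ n, Subgroup.zpowers (Yc u y i) = N :=
    fun i hi => Yc_zpowers_eq u y n r s M hconj hyM hsM hun hi
  have h1N : u⁻¹ * y * u ∈ N := by
    have h := hNeq 1 hn
    have : Yc u y 1 ∈ Subgroup.zpowers (Yc u y 1) := Subgroup.mem_zpowers _
    rw [h] at this
    simpa [Yc, MulAut.conj_apply, zpow_one] using this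
  have hinv : (u ^ ((n - 1 : ℕ) : ℤ))⁻¹ = u := by
    have h1 : u ^ ((n - 1 : ℕ) : ℤ) * u ^ (1 : ℤ) = 1 := by
      rw [← zpow_add, (by omega : ((n - 1 : ℕ) : ℤ) + 1 = (n : ℤ)), hun]
    rw [zpow_one] at h1
    rw [eq_inv_of_mul_eq_one_left h1, inv_inv]
  have h2N : u * y * u⁻¹ ∈ N := by
    have h := hNeq (n - 1) (Nat.sub_le n 1)
    have hmem : Yc u y (n - 1) ∈ Subgroup.zpowers (Yc u y (n - 1)) := Subgroup.mem_zpowers _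
    rw [h] at hmem
    have heq : Yc u y (n - 1) = u * y * u⁻¹ := by
      rw [Yc, MulAut.conj_apply, hinv]
    rwa [heq] at hmem
  -- N is normal
  have hu_norm : u ∈ Subgroup.normalizer (N : Set _) := by
    obtain ⟨a, ha⟩ := Subgroup.mem_zpowers_iff.mp h2N
    obtain ⟨b, hb⟩ := Subgroup.mem_zpowers_iff.mp h1N
    rw [Subgroup.mem_normalizer_iff]
    intro h
    constructor
    · intro hh
      obtain ⟨k, rfl⟩ := Subgroup.mem_zpowers_iff.mp hh
      have h5 : u * y ^ k * u⁻¹ = (u * y * u⁻¹) ^ k := by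
        simpa [MulAut.conj_apply] using map_zpow (MulAut.conj u) y k
      rw [h5, ← ha, ← zpow_mul]
      exact Subgroup.zpow_mem _ (Subgroup.mem_zpowers y) _
    · intro hh
      obtain ⟨k, hk⟩ := Subgroup.mem_zpowers_iff.mp hh
      have h6 : h = u⁻¹ * y ^ k * u := by
        rw [hk]; group
      have h7 : u⁻¹ * y ^ k * u = (u⁻¹ * y * u) ^ k := by
        simpa [MulAut.conj_apply] using map_zpow (MulAut.conj u⁻¹) y k
      rw [h6, h7, ← hb, ← zpow_mul]
      exact Subgroup.zpow_mem _ (Subgroup.mem_zpowers y) _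
  obtain ⟨c, e, hce⟩ := Int.isCoprime_iff_gcd_eq_one.mpr hnA
  have htu : u ^ e = t := by
    rw [hudef, ← zpow_mul]
    have hAe : A * e = 1 - (n : ℤ) * c := by linear_combination hce
    rw [hAe, zpow_sub, zpow_one, zpow_mul, ht, one_zpow]
    rw [inv_one, mul_one]
  have ht_norm : t ∈ Subgroup.normalizer (N : Set _) := htu ▸ Subgroup.zpow_mem _ hu_norm e
  have hN_normal : N.Normal := by
    rw [← Subgroup.normalizer_eq_top_iff]
    apply top_unique
    rw [← PresentedGroup.closure_range_of (Erels n r s A)]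
    apply (Subgroup.closure_le _).mpr
    rintro x ⟨b, rfl⟩
    simp only [SetLike.mem_coe]
    cases b
    · rw [← hydef]
      exact Subgroup.le_normalizer (Subgroup.mem_zpowers y)
    · rw [← htdef]
      exact ht_norm
  haveI := hN_normal
  -- the quotient is cyclic, generated by the image of t
  set π := QuotientGroup.mk' N with hπdef
  have hπy : π y = 1 := (QuotientGroup.eq_one_iff _).mpr (Subgroup.mem_zpowers y)
  have htop : Subgroup.zpowers (π t) = ⊤ := by
    apply top_unique
    have h1 : Subgroup.map π ⊤ = ⊤ :=
      Subgroup.map_top_of_surjective _ (QuotientGroup.mk'_surjective N)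
    rw [← PresentedGroup.closure_range_of (Erels n r s A), MonoidHom.map_closure] at h1
    rw [← h1]
    apply (Subgroup.closure_le _).mpr
    rintro x ⟨x', ⟨b, rfl⟩, rfl⟩
    simp only [SetLike.mem_coe]
    cases b
    · rw [← hydef, hπy]
      exact Subgroup.one_mem _
    · rw [← htdef]
      exact Subgroup.mem_zpowers _
  have hcycQ : IsCyclic (PresentedGroup (Erels n r s A) ⧸ N) := by
    constructor
    refine ⟨π t, fun x => ?_⟩
    have hx : x ∈ Subgroup.zpowers (π t) := by rw [htop]; exact Subgroup.mem_top x
    obtain ⟨k, hk⟩ := Subgroup.mem_zpowers_iff.mp hx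
    exact ⟨k, hk⟩
  have hcycN : IsCyclic N := by
    constructor
    refine ⟨⟨y, Subgroup.mem_zpowers y⟩, ?_⟩
    rintro ⟨x, hx⟩
    obtain ⟨k, hk⟩ := Subgroup.mem_zpowers_iff.mp hx
    exact ⟨k, by ext; simpa using hk⟩
  -- finiteness and cardinality
  have hyMnat : y ^ M.natAbs = 1 := by
    rcases Int.natAbs_eq M with h | h
    · rw [← zpow_natCast, ← h, hyM]
    · rw [← zpow_natCast, show ((M.natAbs : ℤ)) = -M by omega, zpow_neg, hyM, inv_one]
  have hordy : orderOf y ∣ M.natAbs := orderOf_dvd_of_pow_eq_one hyMnat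
  have hMnat0 : 0 < M.natAbs := Int.natAbs_pos.mpr hM0
  have hordy_pos : 0 < orderOf y := Nat.pos_of_dvd_of_pos hordy hMnat0
  haveI hfinN : Finite N := (orderOf_pos_iff.mp hordy_pos).finite_zpowers.to_subtype
  have htn : (π t) ^ n = 1 := by
    rw [← map_pow, show (t ^ n : PresentedGroup (Erels n r s A)) = 1 by
      rw [← zpow_natCast, ht], map_one]
  have hordt : orderOf (π t) ∣ n := orderOf_dvd_of_pow_eq_one htn
  have hordt_pos : 0 < orderOf (π t) := Nat.pos_of_dvd_of_pos hordt hn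
  have hfinTop : Finite (Subgroup.zpowers (π t)) :=
    (orderOf_pos_iff.mp hordt_pos).finite_zpowers.to_subtype
  haveI hfinQ : Finite (PresentedGroup (Erels n r s A) ⧸ N) := by
    rw [htop] at hfinTop
    exact Finite.of_equiv _ Subgroup.topEquiv.toEquiv
  haveI hfinP : Finite (PresentedGroup (Erels n r s A)) :=
    Finite.of_equiv _ (Subgroup.groupEquivQuotientProdSubgroup (s := N)).symm
  have hcard : Nat.card (PresentedGroup (Erels n r s A)) =
      Nat.card (PresentedGroup (Erels n r s A) ⧸ N) * Nat.card N :=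
    Subgroup.card_eq_card_quotient_mul_card_subgroup N
  have hcardQ : Nat.card (PresentedGroup (Erels n r s A) ⧸ N) = orderOf (π t) := by
    calc Nat.card (PresentedGroup (Erels n r s A) ⧸ N)
        = Nat.card (⊤ : Subgroup (PresentedGroup (Erels n r s A) ⧸ N)) :=
          (Nat.card_congr Subgroup.topEquiv.toEquiv).symm
      _ = Nat.card (Subgroup.zpowers (π t)) := by rw [htop]
      _ = orderOf (π t) := Nat.card_zpowers _
  have hcardN : Nat.card N = orderOf y := Nat.card_zpowers y
  have hupper : Nat.card (PresentedGroup (Erels n r s A)) ≤ n * M.natAbs := by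
    rw [hcard, hcardQ, hcardN]
    exact Nat.mul_le_mul (Nat.le_of_dvd hn hordt) (Nat.le_of_dvd hMnat0 hordy)
  have hlower : n * M.natAbs ≤ Nat.card (PresentedGroup (Erels n r s A)) :=
    stmt13_lower n hn r s A hnA hrs hpow
  exact ⟨hfinP, le_antisymm hupper hlower, N, hN_normal, hcycN, hcycQ⟩
end

section
/- Let G be a finite nontrivial cyclically presented group in the class 𝔐 with parameters (r,n,s,f,A) satisfying f(r−s) ≡ 0 mod n, gcd(r,s) = gcd(n,A) = 1. Then for 0 ≤ j < n, the fixed-point subgroup Fix(θ^j) of the j-th power of the shift automorphism θ on G has order |r^{(n,j)} − s^{(n,j)}|, where (n,j) = gcd(n,j). -/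
private def addRightHom (M : Type*) [AddCommGroup M] : Multiplicative M →* Equiv.Perm M where
  toFun a := Equiv.addRight a.toAdd
  map_one' := by ext x; simp
  map_mul' a b := by
    ext x
    simp only [Equiv.Perm.coe_mul, Function.comp_apply, Equiv.coe_addRight, toAdd_mul]
    abel

private lemma addRightHom_zpow_apply {M : Type*} [AddCommGroup M] (a : M) (c : ℤ) (x : M) :
    ((addRightHom M (Multiplicative.ofAdd a)) ^ c) x = x + c • a := by
  rw [← map_zpow, ← ofAdd_zsmul]
  rfl

private lemma addRightHom_pow_apply {M : Type*} [AddCommGroup M] (a : M) (c : ℕ) (x : M) :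
    ((addRightHom M (Multiplicative.ofAdd a)) ^ c) x = x + c • a := by
  have := addRightHom_zpow_apply a (c : ℤ) x
  rw [zpow_natCast] at this
  simpa using this

private lemma int_gcd_add_mul (a b c : ℤ) : Int.gcd (a + b * c) b = Int.gcd a b := by
  apply Nat.dvd_antisymm <;> apply Int.natCast_dvd_natCast.mp
  · refine Int.dvd_coe_gcd ?_ (Int.gcd_dvd_right _ _)
    have h1 : ((Int.gcd (a + b*c) b : ℕ) : ℤ) ∣ (a + b*c) := Int.gcd_dvd_left _ _
    have h2 : ((Int.gcd (a + b*c) b : ℕ) : ℤ) ∣ b := Int.gcd_dvd_right _ _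
    have h3 := dvd_sub h1 (h2.mul_right c)
    simpa using h3
  · refine Int.dvd_coe_gcd ?_ (Int.gcd_dvd_right _ _)
    have h1 : ((Int.gcd a b : ℕ) : ℤ) ∣ a := Int.gcd_dvd_left _ _
    have h2 : ((Int.gcd a b : ℕ) : ℤ) ∣ b := Int.gcd_dvd_right _ _
    exact dvd_add h1 (h2.mul_right c)

private lemma int_gcd_unit_mul (u a b : ℤ) (hu : Int.gcd u b = 1) :
    Int.gcd (u * a) b = Int.gcd a b := by
  unfold Int.gcd at *
  rw [Int.natAbs_mul]
  exact Nat.Coprime.gcd_mul_left_cancel _ hu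

private lemma isCoprime_sub_pow {r s : ℤ} (h : IsCoprime s r) {b : ℕ} (hb : b ≠ 0) :
    IsCoprime s (r ^ b - s ^ b) := by
  obtain ⟨b, rfl⟩ := Nat.exists_eq_succ_of_ne_zero hb
  have h2 : r ^ (b+1) - s ^ (b+1) = r ^ (b+1) + s * (-(s ^ b)) := by ring
  rw [h2]
  exact (h.pow_right).add_mul_left_right _

private lemma sub_pow_dvd (r s : ℤ) (b q : ℕ) : (r^b - s^b) ∣ (r^(b*q) - s^(b*q)) := by
  induction q with
  | zero => simp
  | succ q ih =>
    have key : r ^ (b*(q+1)) - s ^ (b*(q+1))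
        = (r^(b*q) - s^(b*q)) * r^b + s^(b*q) * (r^b - s^b) := by ring
    rw [key]
    exact dvd_add (ih.mul_right _) (dvd_mul_left _ _)

private lemma gcd_pow_sub_pow (r s : ℤ) (hrs : Int.gcd r s = 1) (b : ℕ) :
    ∀ a : ℕ, Int.gcd (r ^ a - s ^ a) (r ^ b - s ^ b)
      = (r ^ Nat.gcd a b - s ^ Nat.gcd a b).natAbs := by
  induction b using Nat.strong_induction_on with
  | _ b ih =>
    intro a
    rcases Nat.eq_zero_or_pos b with rfl | hb
    · simp [Int.gcd]
    · obtain ⟨q1, ρ, hρlt, rfl⟩ : ∃ q1 ρ, ρ < b ∧ a = b * q1 + ρ :=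
        ⟨a / b, a % b, Nat.mod_lt a hb, (Nat.div_add_mod a b).symm⟩
      obtain ⟨c, hc⟩ := sub_pow_dvd r s b q1
      have key : r ^ (b * q1 + ρ) - s ^ (b * q1 + ρ)
          = s ^ (b * q1) * (r ^ ρ - s ^ ρ)
            + (r ^ b - s ^ b) * (c * r ^ ρ) := by
        rw [pow_add, pow_add]
        have h4 : r ^ (b * q1) = s ^ (b * q1) + (r^b - s^b) * c := by rw [← hc]; ring
        rw [h4]; ring
      have hcops : Int.gcd (s ^ (b * q1)) (r ^ b - s ^ b) = 1 := by
        have h1 : IsCoprime (s:ℤ) (r^b - s^b) :=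
          isCoprime_sub_pow (Int.isCoprime_iff_gcd_eq_one.mpr (by rwa [Int.gcd_comm])) hb.ne'
        exact Int.isCoprime_iff_gcd_eq_one.mp h1.pow_left
      rw [key, int_gcd_add_mul, int_gcd_unit_mul _ _ _ hcops, Int.gcd_comm,
        ih ρ hρlt b]
      congr 2
      · rw [show b * q1 + ρ = ρ + q1 * b from by ring, Nat.gcd_add_mul_right_left,
          Nat.gcd_comm]
      · rw [show b * q1 + ρ = ρ + q1 * b from by ring, Nat.gcd_add_mul_right_left,
          Nat.gcd_comm]

private lemma card_ann (m : ℕ) (hm : m ≠ 0) (W : ℤ) :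
    Nat.card {α : ZMod m // α * (W : ZMod m) = 0} = Int.gcd W m := by
  haveI : NeZero m := ⟨hm⟩
  set gc := Int.gcd W m with hgc
  have hgcpos : 0 < gc := by
    rcases Nat.eq_zero_or_pos gc with h0 | h0
    · exfalso
      have := Int.gcd_eq_zero_iff.mp (hgc ▸ h0)
      exact hm (by exact_mod_cast this.2)
    · exact h0
  have hdvd_m : gc ∣ m := by
    have : (gc:ℤ) ∣ (m:ℤ) := Int.gcd_dvd_right _ _
    exact_mod_cast this
  obtain ⟨W', hW'⟩ : (gc : ℤ) ∣ W := Int.gcd_dvd_left _ _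
  set q := m / gc with hq
  have hqgc : q * gc = m := Nat.div_mul_cancel hdvd_m
  have hqpos : 0 < q := by
    rcases Nat.eq_zero_or_pos q with h0 | h0
    · exfalso; rw [h0] at hqgc; simp at hqgc; exact hm hqgc.symm
    · exact h0
  have hgcZ : (gc:ℤ) ≠ 0 := by exact_mod_cast hgcpos.ne'
  have hcop : IsCoprime (W') ((q:ℤ)) := by
    have h1 := Int.gcd_div_gcd_div_gcd (i := W) (j := (m:ℤ)) (by
      rw [show Int.gcd W (m:ℤ) = gc from rfl]; exact_mod_cast hgcpos)
    have hW'eq : W / (gc:ℤ) = W' := by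
      rw [hW']; exact Int.mul_ediv_cancel_left _ hgcZ
    have hmq : (m:ℤ) / (gc:ℤ) = (q:ℤ) := by
      have : (m:ℤ) = (gc:ℤ) * (q:ℤ) := by exact_mod_cast (by rw [mul_comm] at hqgc; exact hqgc.symm)
      rw [this]; exact Int.mul_ediv_cancel_left _ hgcZ
    rw [show W.gcd (m:ℤ) = gc from rfl] at h1
    rw [hW'eq, hmq] at h1
    exact Int.isCoprime_iff_gcd_eq_one.mpr h1
  have hf : ∀ i : Fin gc, ((i.val * q : ℕ) : ZMod m) * (W : ZMod m) = 0 := by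
    intro i
    have h2 : ((i.val * q : ℕ) : ℤ) * W = (m:ℤ) * (i.val * W') := by
      rw [hW']
      have : ((q:ℕ):ℤ) * (gc:ℤ) = (m:ℤ) := by exact_mod_cast hqgc
      push_cast
      rw [← this]; ring
    calc ((i.val*q:ℕ) : ZMod m) * (W:ZMod m) = (((i.val*q : ℕ) : ℤ) * W : ℤ) := by push_cast; ring
    _ = 0 := by rw [h2]; push_cast; simp
  let F : Fin gc → {α : ZMod m // α * (W:ZMod m) = 0} := fun i => ⟨_, hf i⟩
  have hinj : Function.Injective F := by
    intro i i' hii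
    have h1 : ((i.val * q : ℕ) : ZMod m) = ((i'.val * q : ℕ) : ZMod m) := congrArg Subtype.val hii
    have b1 : i.val * q < m := by
      have := (Nat.mul_lt_mul_right hqpos).mpr i.isLt
      rwa [mul_comm gc q, hqgc] at this
    have b2 : i'.val * q < m := by
      have := (Nat.mul_lt_mul_right hqpos).mpr i'.isLt
      rwa [mul_comm gc q, hqgc] at this
    have h2 : i.val * q = i'.val * q := by
      rw [← ZMod.val_cast_of_lt b1, ← ZMod.val_cast_of_lt b2, h1]
    exact Fin.ext (Nat.eq_of_mul_eq_mul_right hqpos h2)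
  have hsurj : Function.Surjective F := by
    rintro ⟨α, hα⟩
    have haval : ((α.val : ℕ) : ZMod m) = α := by rw [ZMod.natCast_val, ZMod.cast_id]
    have hdvd : (m:ℤ) ∣ (α.val : ℤ) * W := by
      rw [← ZMod.intCast_zmod_eq_zero_iff_dvd]
      push_cast
      rw [haval]
      exact hα
    have hqa : (q:ℤ) ∣ (α.val:ℤ) := by
      have hmz : (m:ℤ) = (q:ℤ) * (gc:ℤ) := by exact_mod_cast hqgc.symm
      have h5 := hdvd
      rw [hW', hmz] at h5
      rw [show (α.val:ℤ) * ((gc:ℤ) * W') = ((α.val:ℤ) * W') * (gc:ℤ) from by ring] at h5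
      have h6 := (mul_dvd_mul_iff_right hgcZ).mp h5
      exact hcop.symm.dvd_of_dvd_mul_right h6
    obtain ⟨i0, hi0⟩ : q ∣ α.val := by exact_mod_cast hqa
    have hib : i0 < gc := by
      have h4 : α.val < m := ZMod.val_lt α
      rw [hi0, ← hqgc, mul_comm q gc, mul_comm gc q] at h4
      exact Nat.lt_of_mul_lt_mul_left h4
    refine ⟨⟨i0, hib⟩, ?_⟩
    apply Subtype.ext
    show ((i0 * q : ℕ) : ZMod m) = α
    rw [show i0 * q = α.val from by rw [hi0, mul_comm]]
    exact haval
  exact Nat.card_eq_of_equiv_fin (Equiv.ofBijective F ⟨hinj, hsurj⟩).symm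

set_option maxHeartbeats 3000000 in
/-- let `G` be the finite nontrivial cyclically presented group in
class `𝔐` with parameters `(r,n,s,f,A)`, realized as the kernel of the retraction
`ν = ν^f : E → ℤ_n` sending `t ↦ 1`, `y ↦ f`, where `f(r-s) ≡ 0 mod n` and
`gcd(r,s) = gcd(n,A) = 1`.  For `0 ≤ j < n`, the fixed-point subgroup of the `j`-th
power of the shift (conjugation by `t` in `E`), namely `G ∩ C_E(t^j)`, has order
`|r^{(n,j)} - s^{(n,j)}|`. -/
theorem stmt_16 (n : ℕ) (hn : 0 < n) (r s A f : ℤ)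
    (hf : (n : ℤ) ∣ f * (r - s)) (hrs : Int.gcd r s = 1) (hnA : Int.gcd (n : ℤ) A = 1)
    (ν : PresentedGroup (Erels n r s A) →* Multiplicative (ZMod n))
    (hνt : ν (PresentedGroup.of true) = Multiplicative.ofAdd (1 : ZMod n))
    (hνy : ν (PresentedGroup.of false) = Multiplicative.ofAdd ((f : ZMod n)))
    (hfin : Finite ν.ker) (hnontriv : ν.ker ≠ ⊥)
    (j : ℕ) (hj : j < n) :
    Nat.card ↥(ν.ker ⊓
        Subgroup.centralizer {(PresentedGroup.of (rels := Erels n r s A) true) ^ j}) =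
      (r ^ Nat.gcd n j - s ^ Nat.gcd n j).natAbs := by
  classical
  haveI : NeZero n := ⟨hn.ne'⟩
  set t : PresentedGroup (Erels n r s A) := PresentedGroup.of true with ht
  set y : PresentedGroup (Erels n r s A) := PresentedGroup.of false with hy
  -- relations hold
  have hrelmem : ∀ w ∈ Erels n r s A, PresentedGroup.mk (Erels n r s A) w = 1 := by
    intro w hw
    exact (QuotientGroup.eq_one_iff w).mpr (Subgroup.subset_normalClosure hw)
  have hrelt : t ^ (n : ℤ) = 1 := by
    have h := hrelmem _ (Set.mem_insert _ _)
    rw [map_zpow] at h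
    exact h
  have hreltn : t ^ n = 1 := by rw [← zpow_natCast]; exact hrelt
  have hrelw0 : y ^ r * t ^ A * y ^ (-s) * t ^ (-A) = 1 := by
    have h := hrelmem _ (Set.mem_insert_iff.mpr (Or.inr rfl))
    rw [map_mul, map_mul, map_mul, map_zpow, map_zpow, map_zpow, map_zpow] at h
    exact h
  have tzeq : ∀ b b' : ℤ, ((b : ZMod n) = (b' : ZMod n)) → t ^ b = t ^ b' := by
    intro b b' hbb
    have h1 : (n:ℤ) ∣ b - b' := by
      rwa [← ZMod.intCast_zmod_eq_zero_iff_dvd, Int.cast_sub, sub_eq_zero]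
    obtain ⟨k, hk⟩ := h1
    have h2 : b = b' + n * k := by linarith
    rw [h2, zpow_add, zpow_mul, hrelt, one_zpow, mul_one]
  have tneq : ∀ b b' : ℕ, ((b : ZMod n) = (b' : ZMod n)) → t ^ b = t ^ b' := by
    intro b b' hbb
    rw [← zpow_natCast, ← zpow_natCast t b']
    exact tzeq _ _ (by push_cast; exact_mod_cast hbb)
  -- nondegeneracy
  have hm0 : r ^ n - s ^ n ≠ 0 := by
    intro hrn0
    have hrn : r ^ n = s ^ n := by linarith
    have hnab : r.natAbs = s.natAbs := by
      have h1 : r.natAbs ^ n = s.natAbs ^ n := by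
        rw [← Int.natAbs_pow, ← Int.natAbs_pow, hrn]
      exact Nat.pow_left_injective hn.ne' h1
    have hs1 : s.natAbs = 1 := by
      have h2 := hrs
      rw [Int.gcd, hnab, Nat.gcd_self] at h2
      exact h2
    have hr1 : r.natAbs = 1 := by rw [hnab]; exact hs1
    -- a general contradiction builder
    have key : ∀ T : Equiv.Perm ℤ, T ^ (n:ℤ) = 1 →
        ((Equiv.addRight (1:ℤ)) ^ r * T ^ A * (Equiv.addRight (1:ℤ)) ^ (-s) * T ^ (-A) = 1) →
        False := by
      intro T hT1 hT2
      have hP1 : Equiv.addRight (1:ℤ) = addRightHom ℤ (Multiplicative.ofAdd 1) := rfl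
      have hcheckT : ∀ w ∈ Erels n r s A,
          FreeGroup.lift (fun b => bif b then T else Equiv.addRight (1:ℤ)) w = 1 := by
        intro w hw
        rcases Set.mem_insert_iff.mp hw with rfl | hw2
        · rw [map_zpow, FreeGroup.lift_apply_of]
          exact hT1
        · rw [Set.mem_singleton_iff] at hw2; subst hw2
          rw [map_mul, map_mul, map_mul, map_zpow, map_zpow, map_zpow, map_zpow,
            FreeGroup.lift_apply_of, FreeGroup.lift_apply_of]
          exact hT2
      set ψ := PresentedGroup.toGroup hcheckT with hψ
      have hψy : ψ y = Equiv.addRight (1:ℤ) := by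
        rw [hy, hψ]; exact PresentedGroup.toGroup.of hcheckT
      have hmem : ∀ k : ℕ, y ^ (n * k) ∈ ν.ker := by
        intro k
        rw [MonoidHom.mem_ker, map_pow, hνy, ← ofAdd_nsmul, nsmul_eq_mul]
        rw [show (((n * k : ℕ)) : ZMod n) = 0 from by
          rw [ZMod.natCast_eq_zero_iff]; exact Dvd.intro k rfl]
        rw [zero_mul]
        rfl
      have hginj : Function.Injective (fun k : ℕ => (⟨y ^ (n*k), hmem k⟩ : ν.ker)) := by
        intro k k' hkk
        have h30 : y ^ (n*k) = y ^ (n*k') := congrArg Subtype.val hkk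
        have h31 := congrArg (fun e => ψ e 0) h30
        simp only [map_pow, hψy, hP1] at h31
        rw [addRightHom_pow_apply, addRightHom_pow_apply] at h31
        have h32 : ((n*k : ℕ) : ℤ) = ((n*k' : ℕ) : ℤ) := by simpa [nsmul_eq_mul] using h31
        have h33 : n * k = n * k' := by exact_mod_cast h32
        exact Nat.eq_of_mul_eq_mul_left hn h33
      haveI := hfin
      haveI := Infinite.of_injective _ hginj
      exact not_finite ↥ν.ker
    have hrcase : r = 1 ∨ r = -1 := Int.natAbs_eq_iff.mp hr1
    have hscase : s = 1 ∨ s = -1 := Int.natAbs_eq_iff.mp hs1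
    by_cases hreqs : r = s
    · -- T = 1
      apply key 1 (one_zpow _)
      rw [hreqs]
      simp only [one_zpow, mul_one]
      rw [← zpow_add]
      simp
    · -- r = -s, and n must be even
      have hrns : r = -s := by
        rcases hrcase with h41 | h41 <;> rcases hscase with h42 | h42
        · exact absurd (h41.trans h42.symm) hreqs
        · simp [h41, h42]
        · simp [h41, h42]
        · exact absurd (h41.trans h42.symm) hreqs
      have hsne : (s:ℤ) ≠ 0 := by
        rcases hscase with h42 | h42 <;> rw [h42] <;> norm_num
      have hneg1 : (-1:ℤ)^n = 1 := by
        have h50 : ((-1:ℤ))^n * s^n = s^n := by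
          calc ((-1:ℤ))^n * s^n = ((-1) * s)^n := (mul_pow _ _ _).symm
          _ = r^n := by rw [show ((-1:ℤ)) * s = r from by rw [hrns]; ring]
          _ = s^n := hrn
        have hsn : (s:ℤ)^n ≠ 0 := pow_ne_zero _ hsne
        exact mul_right_cancel₀ hsn (by rw [h50, one_mul])
      have hneven : Even n := by
        rcases Nat.even_or_odd n with he | ho
        · exact he
        · exfalso; rw [ho.neg_one_pow] at hneg1; norm_num at hneg1
      have hAodd : Odd A := by
        rcases Int.even_or_odd A with hA | hA
        · exfalso
          obtain ⟨l, hl⟩ := hneven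
          obtain ⟨l2, hl2⟩ := hA
          have hdvd2 : (2:ℤ) ∣ Int.gcd (n:ℤ) A := by
            apply Int.dvd_coe_gcd
            · exact ⟨l, by push_cast; omega⟩
            · exact ⟨l2, by omega⟩
          rw [hnA] at hdvd2
          norm_num at hdvd2
        · exact hA
      set T : Equiv.Perm ℤ := Equiv.neg ℤ with hTdef
      have hT2 : T ^ 2 = 1 := by
        apply Equiv.ext
        intro x
        simp [hTdef, pow_two, Equiv.Perm.mul_apply]
      have hTzpow : ∀ l : ℤ, T ^ (2 * l) = 1 := by
        intro l
        rw [zpow_mul]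
        rw [show T ^ (2:ℤ) = 1 from by rw [show (2:ℤ) = ((2:ℕ):ℤ) from rfl, zpow_natCast, hT2]]
        exact one_zpow _
      have hT1 : T ^ (n:ℤ) = 1 := by
        obtain ⟨l, hl⟩ := hneven
        rw [show ((n:ℕ):ℤ) = 2 * (l:ℤ) from by push_cast; omega]
        exact hTzpow l
      have hTA : T ^ (A:ℤ) = T := by
        obtain ⟨l2, hl2⟩ := hAodd
        rw [show (A:ℤ) = 2 * l2 + 1 from by omega, zpow_add, hTzpow, one_mul, zpow_one]
      have hTinv : T⁻¹ = T := by
        have h51 := hT2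
        rw [pow_two] at h51
        exact inv_eq_of_mul_eq_one_right h51
      have hTAneg : T ^ (-A) = T := by rw [zpow_neg, hTA, hTinv]
      apply key T hT1
      rw [hTA, hTAneg]
      apply Equiv.ext
      intro x
      have hPz : ∀ (c : ℤ) (z : ℤ), ((Equiv.addRight (1:ℤ)) ^ c) z = z + c := by
        intro c z
        rw [show Equiv.addRight (1:ℤ) = addRightHom ℤ (Multiplicative.ofAdd 1) from rfl,
          addRightHom_zpow_apply]
        simp
      rw [Equiv.Perm.mul_apply, Equiv.Perm.mul_apply, Equiv.Perm.mul_apply]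
      rw [hPz, Equiv.Perm.one_apply]
      rw [show T x = -x from rfl]
      rw [hPz]
      rw [show ∀ z : ℤ, T z = -z from fun z => rfl]
      omega
  set m : ℕ := (r ^ n - s ^ n).natAbs with hm
  have hmne : m ≠ 0 := by simpa [hm, Int.natAbs_eq_zero] using hm0
  haveI : NeZero m := ⟨hmne⟩
  have hmdvd : (m:ℤ) ∣ (r ^ n - s ^ n) := Int.natAbs_dvd.mpr dvd_rfl
  -- the conjugation chain: y has order dividing m
  set cA : MulAut (PresentedGroup (Erels n r s A)) := MulAut.conj (t ^ A) with hcA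
  have hrelw : y ^ r = (cA y) ^ s := by
    have h1 : y ^ r = t ^ A * y ^ s * t ^ (-A) := by
      rw [← mul_inv_eq_one, ← hrelw0]; group
    have h2 : t ^ A * y ^ s * t ^ (-A) = cA (y ^ s) := by
      rw [hcA, MulAut.conj_apply, zpow_neg]
    rw [h1, h2, map_zpow]
  have hchain : ∀ k : ℕ, y ^ ((r ^ k : ℤ)) = ((cA ^ k) y) ^ ((s ^ k : ℤ)) := by
    intro k; induction k with
    | zero => simp
    | succ k ih =>
      have e2 : ((cA ^ k) y) ^ (r:ℤ) = ((cA ^ (k+1)) y) ^ (s : ℤ) := by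
        calc ((cA^k) y) ^ (r:ℤ) = (cA^k) (y ^ (r:ℤ)) := (map_zpow _ _ _).symm
        _ = (cA^k) ((cA y)^(s:ℤ)) := by rw [hrelw]
        _ = ((cA^k) (cA y))^(s:ℤ) := map_zpow _ _ _
        _ = ((cA^(k+1)) y)^(s:ℤ) := by rw [pow_succ, MulAut.mul_apply]
      calc y ^ ((r ^ (k+1) : ℤ)) = (y ^ ((r^k : ℤ))) ^ (r:ℤ) := by
            rw [show ((r ^ (k+1) : ℤ)) = (r^k : ℤ) * r from by ring, zpow_mul]
      _ = (((cA ^ k) y) ^ ((s^k : ℤ))) ^ (r:ℤ) := by rw [ih]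
      _ = (((cA ^ k) y) ^ (r:ℤ)) ^ ((s^k : ℤ)) := by
            rw [← zpow_mul, mul_comm, zpow_mul]
      _ = (((cA ^ (k+1)) y) ^ (s:ℤ)) ^ ((s^k : ℤ)) := by rw [e2]
      _ = ((cA ^ (k+1)) y) ^ ((s ^ (k+1) : ℤ)) := by
            rw [← zpow_mul, show (s:ℤ) * (s^k:ℤ) = (s^(k+1) : ℤ) from by ring]
  have hcAn : cA ^ n = 1 := by
    have h3 : (t ^ A) ^ n = 1 := by
      rw [← zpow_natCast, ← zpow_mul, mul_comm, zpow_mul, hrelt, one_zpow]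
    calc cA ^ n = MulAut.conj ((t^A)^n) := by rw [hcA, ← map_pow]
    _ = 1 := by rw [h3, map_one]
  have hyrs : y ^ (r ^ n - s ^ n) = 1 := by
    have h3 := hchain n
    rw [hcAn] at h3
    have h4 : ((1 : MulAut (PresentedGroup (Erels n r s A))) y) = y := rfl
    rw [h4] at h3
    rw [zpow_sub, h3, mul_inv_cancel]
  have hody : orderOf y ∣ m := by
    have h5 := orderOf_dvd_iff_zpow_eq_one.mpr hyrs
    have h6 := Int.natAbs_dvd_natAbs.mpr h5
    simpa using h6
  have hym : y ^ m = 1 := orderOf_dvd_iff_pow_eq_one.mp hody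
  have hymz : y ^ (m:ℤ) = 1 := by rw [zpow_natCast]; exact hym
  -- coprimality facts
  have hcop_sr : IsCoprime (s:ℤ) r := by
    rw [Int.isCoprime_iff_gcd_eq_one, Int.gcd_comm]; exact hrs
  have hcop_s : IsCoprime (s:ℤ) (r^n - s^n) := isCoprime_sub_pow hcop_sr hn.ne'
  have hcop_r : IsCoprime (r:ℤ) (r^n - s^n) := by
    have h7 := isCoprime_sub_pow hcop_sr.symm hn.ne'
    have h8 : r^n - s^n = -(s^n - r^n) := by ring
    rw [h8]; exact h7.neg_right
  have absg : ∀ X : ℤ, Int.gcd X (m:ℤ) = Int.gcd X (r^n - s^n) := by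
    intro X; rw [hm]; simp [Int.gcd, Int.natAbs_abs]
  have hcop_sm : IsCoprime (s:ℤ) (m:ℤ) := by
    rw [Int.isCoprime_iff_gcd_eq_one, absg]
    exact Int.isCoprime_iff_gcd_eq_one.mp hcop_s
  have hcop_rm : IsCoprime (r:ℤ) (m:ℤ) := by
    rw [Int.isCoprime_iff_gcd_eq_one, absg]
    exact Int.isCoprime_iff_gcd_eq_one.mp hcop_r
  -- units mod m
  have hcastm0 : ((m:ℤ) : ZMod m) = 0 := by push_cast; simp
  have hunit : ∀ x : ℤ, IsCoprime x (m:ℤ) → IsUnit ((x:ℤ) : ZMod m) := by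
    intro x hx
    obtain ⟨u, v, huv⟩ := hx
    refine IsUnit.of_mul_eq_one ((u : ZMod m)) ?_
    have h9 := congrArg (fun z : ℤ => ((z : ZMod m))) huv
    push_cast at h9
    rw [show ((m:ℕ) : ZMod m) = 0 from ZMod.natCast_self m] at h9
    rw [mul_comm]
    simpa using h9
  have hunit_r : IsUnit ((r:ℤ) : ZMod m) := hunit r hcop_rm
  have hunit_s : IsUnit ((s:ℤ) : ZMod m) := hunit s hcop_sm
  set ru : (ZMod m)ˣ := hunit_r.unit with hru
  set su : (ZMod m)ˣ := hunit_s.unit with hsu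
  set gU : (ZMod m)ˣ := ru * su⁻¹ with hgU
  have hrn_sn : ((r:ZMod m))^n = ((s:ZMod m))^n := by
    have h10 : (((r^n - s^n : ℤ)) : ZMod m) = 0 :=
      (ZMod.intCast_zmod_eq_zero_iff_dvd _ _).mpr hmdvd
    push_cast at h10
    linear_combination h10
  have hgUn : gU ^ n = 1 := by
    have hrusu : ru^n = su^n := by
      apply Units.ext
      rw [Units.val_pow_eq_pow_val, Units.val_pow_eq_pow_val, IsUnit.unit_spec,
        IsUnit.unit_spec]
      exact hrn_sn
    calc gU^n = ru^n * (su⁻¹)^n := mul_pow _ _ _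
    _ = ru^n * (su^n)⁻¹ := by rw [inv_pow]
    _ = 1 := by rw [hrusu, mul_inv_cancel]
  -- choice of A'
  obtain ⟨A', K, hAA'⟩ : ∃ (A' : ℕ) (K : ℤ), (A:ℤ) * (A':ℤ) = 1 + K * n := by
    have hcopnA : IsCoprime (A:ℤ) (n:ℤ) := by
      rw [Int.isCoprime_iff_gcd_eq_one, Int.gcd_comm]; exact hnA
    obtain ⟨u, v, huv⟩ := hcopnA
    have hnz : (n:ℤ) ≠ 0 := by exact_mod_cast hn.ne'
    set v' := u % (n:ℤ) with hv'
    have hv'nonneg : 0 ≤ v' := Int.emod_nonneg u hnz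
    have hdvd : (n:ℤ) ∣ A * v' - 1 := by
      have h2 : v' = u - n * (u / n) := Int.emod_def u n
      have h3 : A * v' - 1 = n * (-v) - n * (A * (u/n)) := by
        rw [h2]; ring_nf; linarith [huv]
      rw [h3]
      exact dvd_sub (dvd_mul_right _ _) (dvd_mul_right _ _)
    refine ⟨v'.toNat, (A * v' - 1)/n, ?_⟩
    rw [Int.toNat_of_nonneg hv'nonneg]
    have h4 := Int.ediv_mul_cancel hdvd
    linarith
  set hMu : (ZMod m)ˣ := gU ^ A' with hhMu
  have hMuA : hMu ^ (A : ℤ) = gU := by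
    have h1 : hMu ^ (A:ℤ) = gU ^ ((A':ℤ) * A) := by
      rw [hhMu, ← zpow_natCast gU A', ← zpow_mul]
    rw [h1, mul_comm, hAA', zpow_add, zpow_one, mul_comm K (n:ℤ), zpow_mul,
      zpow_natCast, hgUn, one_zpow, mul_one]
  -- permutation representation
  set P : Equiv.Perm (ZMod m) := addRightHom (ZMod m) (Multiplicative.ofAdd 1) with hP
  set T : Equiv.Perm (ZMod m) := MulAction.toPermHom ((ZMod m)ˣ) (ZMod m) hMu with hT
  have hsm1 : ∀ c : ℤ, (c • (1 : ZMod m)) = ((c : ℤ) : ZMod m) := by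
    intro c; rw [zsmul_eq_mul, mul_one]
  have hgUs : (↑gU : ZMod m) * (((s:ℤ)) : ZMod m) = (((r:ℤ)) : ZMod m) := by
    rw [← IsUnit.unit_spec hunit_s, ← IsUnit.unit_spec hunit_r]
    rw [hgU, ← Units.val_mul, inv_mul_cancel_right]
  have hcheck : ∀ w ∈ Erels n r s A,
      FreeGroup.lift (fun b => bif b then T else P) w = 1 := by
    intro w hw
    rcases Set.mem_insert_iff.mp hw with rfl | hw2
    · rw [map_zpow, FreeGroup.lift_apply_of]
      show T ^ (n:ℤ) = 1
      rw [hT, ← map_zpow, ← map_one (MulAction.toPermHom ((ZMod m)ˣ) (ZMod m))]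
      congr 1
      rw [zpow_natCast, hhMu, pow_right_comm, hgUn, one_pow]
    · rw [Set.mem_singleton_iff] at hw2; subst hw2
      rw [map_mul, map_mul, map_mul, map_zpow, map_zpow, map_zpow, map_zpow,
        FreeGroup.lift_apply_of, FreeGroup.lift_apply_of]
      show P ^ r * T ^ A * P ^ (-s) * T ^ (-A) = 1
      have hTA : T ^ (A:ℤ) = MulAction.toPermHom ((ZMod m)ˣ) (ZMod m) gU := by
        rw [hT, ← map_zpow, hMuA]
      have hTA' : T ^ (-A) = MulAction.toPermHom ((ZMod m)ˣ) (ZMod m) gU⁻¹ := by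
        rw [zpow_neg, hTA, ← map_inv]
      apply Equiv.ext
      intro x
      rw [Equiv.Perm.mul_apply, Equiv.Perm.mul_apply, Equiv.Perm.mul_apply, hTA, hTA']
      rw [MulAction.toPermHom_apply, MulAction.toPermHom_apply,
        MulAction.toPerm_apply, MulAction.toPerm_apply, hP,
        addRightHom_zpow_apply, addRightHom_zpow_apply, Equiv.Perm.one_apply]
      rw [hsm1, hsm1]
      rw [Units.smul_def, Units.smul_def, smul_eq_mul, smul_eq_mul]
      have hinv : ((↑gU : ZMod m) * (↑(gU⁻¹) : ZMod m)) = 1 := by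
        rw [← Units.val_mul, mul_inv_cancel, Units.val_one]
      push_cast
      push_cast at hgUs hinv
      linear_combination x * hinv - hgUs
  set φ := PresentedGroup.toGroup hcheck with hφ
  have hφt : φ t = T := by
    rw [ht, hφ]; exact PresentedGroup.toGroup.of hcheck
  have hφy : φ y = P := by
    rw [hy, hφ]; exact PresentedGroup.toGroup.of hcheck
  -- order of y is exactly m
  have h_ordy : orderOf y = m := by
    refine Nat.dvd_antisymm hody ?_
    have h6 : φ (y ^ orderOf y) = 1 := by rw [pow_orderOf_eq_one]; exact map_one φ
    rw [map_pow, hφy] at h6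
    have h7 := congrArg (fun (e : Equiv.Perm (ZMod m)) => e 0) h6
    simp only [hP] at h7
    rw [addRightHom_pow_apply] at h7
    have h9 : ((orderOf y : ℕ) : ZMod m) = 0 := by
      have := h7
      rw [Equiv.Perm.one_apply] at this
      simpa [nsmul_eq_mul] using this
    exact (ZMod.natCast_eq_zero_iff _ _).mp h9
  -- integer exponent equalities on y
  have yeq1 : ∀ d : ℤ, ((d : ZMod m) = 0) ↔ y ^ d = 1 := by
    intro d
    rw [ZMod.intCast_zmod_eq_zero_iff_dvd]
    rw [show ((m:ℕ):ℤ) = ((orderOf y : ℕ) : ℤ) from by rw [h_ordy]]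
    exact orderOf_dvd_iff_zpow_eq_one
  have yeq : ∀ a a' : ℤ, (a : ZMod m) = (a' : ZMod m) → y ^ a = y ^ a' := by
    intro a a' h
    have h1 : y ^ (a - a') = 1 := (yeq1 _).mp (by push_cast; rw [h, sub_self])
    calc y ^ a = y ^ (a - a' + a') := by rw [sub_add_cancel]
    _ = y ^ (a - a') * y ^ a' := zpow_add _ _ _
    _ = y ^ a' := by rw [h1, one_mul]
  have ydet : ∀ a a' : ℤ, y ^ a = y ^ a' → (a : ZMod m) = (a' : ZMod m) := by
    intro a a' h
    have h1 : y ^ (a - a') = 1 := by rw [zpow_sub, h, mul_inv_cancel]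
    have h2 := (yeq1 _).mpr h1
    have h3 : ((a : ZMod m)) - ((a' : ZMod m)) = 0 := by rw [← Int.cast_sub]; exact h2
    exact sub_eq_zero.mp h3
  -- conjugation formula  t y t⁻¹ = y ^ h
  obtain ⟨uu, vv, huv2⟩ := id hcop_sm
  set c : ℤ := r * uu with hc
  have hz1 : cA y = y ^ c := by
    have hcAym : (cA y) ^ ((m:ℕ):ℤ) = 1 := by
      rw [← map_zpow, hymz, map_one]
    calc cA y = (cA y) ^ (uu * s + vv * (m:ℤ)) := by rw [huv2, zpow_one]
    _ = ((cA y) ^ (s:ℤ)) ^ uu * ((cA y) ^ ((m:ℕ):ℤ)) ^ vv := by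
          rw [zpow_add, mul_comm uu s, zpow_mul, mul_comm vv ((m:ℕ):ℤ), zpow_mul]
    _ = (y ^ (r:ℤ)) ^ uu * 1 := by rw [← hrelw, hcAym, one_zpow]
    _ = y ^ c := by rw [mul_one, ← zpow_mul, hc]
  have hsc : (m:ℤ) ∣ s * c - r := by
    have heq : s * c - r = (m:ℤ) * (-(r*vv)) := by rw [hc]; linear_combination r * huv2
    rw [heq]; exact dvd_mul_right _ _
  have hzk : ∀ k : ℕ, (cA ^ k) y = y ^ (c ^ k) := by
    intro k; induction k with
    | zero => simp
    | succ k ih =>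
      calc (cA ^ (k+1)) y = (cA ^ k) (cA y) := by rw [pow_succ, MulAut.mul_apply]
      _ = (cA ^ k) (y ^ c) := by rw [hz1]
      _ = ((cA ^ k) y) ^ c := map_zpow _ _ _
      _ = (y ^ (c^k)) ^ c := by rw [ih]
      _ = y ^ (c ^ (k+1)) := by rw [← zpow_mul, show (c:ℤ)^k * c = c^(k+1) from by ring]
  set h : ℤ := c ^ A' with hh
  have hty : t * y * t⁻¹ = y ^ h := by
    have h11 : t ^ ((A:ℤ) * A') = t := by
      rw [hAA', zpow_add, zpow_one, mul_comm K (n:ℤ), zpow_mul, hrelt, one_zpow, mul_one]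
    have h12 : (cA ^ A') y = t ^ ((A:ℤ) * A') * y * (t ^ ((A:ℤ) * A'))⁻¹ := by
      rw [hcA, ← map_pow, MulAut.conj_apply]
      rw [← zpow_natCast (t ^ A) A', ← zpow_mul]
    rw [← h11, ← h12, hzk, hh]
  have htby : ∀ (b : ℕ) (a : ℤ), t ^ b * y ^ a * (t ^ b)⁻¹ = y ^ (a * h ^ b) := by
    intro b; induction b with
    | zero => intro a; simp
    | succ b ih =>
      intro a
      have h13 : t * y ^ a * t⁻¹ = y ^ (a * h) := by
        calc t * y ^ a * t⁻¹ = MulAut.conj t (y ^ a) := by rw [MulAut.conj_apply]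
        _ = (MulAut.conj t y) ^ a := map_zpow _ _ _
        _ = (t * y * t⁻¹) ^ a := by rw [MulAut.conj_apply]
        _ = (y ^ h) ^ a := by rw [hty]
        _ = y ^ (a * h) := by rw [← zpow_mul, mul_comm]
      calc t^(b+1) * y^a * (t^(b+1))⁻¹ = t^b * (t * y^a * t⁻¹) * (t^b)⁻¹ := by
            rw [pow_succ]; group
      _ = t^b * y^(a*h) * (t^b)⁻¹ := by rw [h13]
      _ = y ^ ((a*h) * h^b) := ih _
      _ = y ^ (a * h^(b+1)) := by rw [show (a*h) * h^b = a * h^(b+1) from by ring]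
  have htby' : ∀ (b : ℕ) (a : ℤ), t ^ b * y ^ a = y ^ (a * h ^ b) * t ^ b := by
    intro b a
    rw [← htby b a]; group
  -- normal form
  have hnf : ∀ x : PresentedGroup (Erels n r s A), ∃ (a : ℤ) (b : ℕ), x = y ^ a * t ^ b := by
    intro x
    obtain ⟨z, rfl⟩ := PresentedGroup.mk_surjective (Erels n r s A) x
    refine FreeGroup.induction_on
      (C := fun z => ∃ (a : ℤ) (b : ℕ), PresentedGroup.mk (Erels n r s A) z = y ^ a * t ^ b)
      z ⟨0, 0, by simp⟩ ?_ ?_ ?_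
    · intro x0; cases x0
      · exact ⟨1, 0, by simp [hy]; rfl⟩
      · exact ⟨0, 1, by simp [ht]; rfl⟩
    · intro x0 _; cases x0
      · refine ⟨-1, 0, ?_⟩
        rw [map_inv]
        rw [show PresentedGroup.mk (Erels n r s A) (FreeGroup.of false) = y from rfl]
        simp
      · refine ⟨0, n-1, ?_⟩
        rw [map_inv]
        rw [show PresentedGroup.mk (Erels n r s A) (FreeGroup.of true) = t from rfl]
        have hnn : (n - 1) + 1 = n := Nat.succ_pred_eq_of_pos hn
        have h14 : t^(n-1) * t = 1 := by
          rw [← pow_succ, hnn, hreltn]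
        rw [inv_eq_of_mul_eq_one_left h14]
        simp
    · rintro z1 z2 ⟨a1, b1, e1⟩ ⟨a2, b2, e2⟩
      refine ⟨a1 + a2 * h ^ b1, b1 + b2, ?_⟩
      rw [map_mul, e1, e2]
      calc y^a1 * t^b1 * (y^a2 * t^b2) = y^a1 * ((t^b1 * y^a2) * t^b2) := by group
      _ = y^a1 * ((y^(a2 * h^b1) * t^b1) * t^b2) := by rw [htby']
      _ = (y^a1 * y^(a2*h^b1)) * (t^b1 * t^b2) := by group
      _ = y^(a1 + a2*h^b1) * t^(b1+b2) := by rw [← zpow_add, ← pow_add]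
  -- evaluations
  have hφeval : ∀ (a : ℤ) (b : ℕ), φ (y ^ a * t ^ b) 0 = ((a:ℤ) : ZMod m) := by
    intro a b
    rw [map_mul, map_zpow, map_pow, hφy, hφt]
    rw [Equiv.Perm.mul_apply]
    have h14 : (T ^ b) 0 = 0 := by
      rw [hT, ← map_pow, MulAction.toPermHom_apply, MulAction.toPerm_apply,
        Units.smul_def, smul_eq_mul, mul_zero]
    rw [h14, hP, addRightHom_zpow_apply, hsm1, zero_add]
  have hνeval : ∀ (a : ℤ) (b : ℕ),
      ν (y ^ a * t ^ b) = Multiplicative.ofAdd (((a:ℤ) : ZMod n) * (f:ZMod n) + ((b:ℕ) : ZMod n)) := by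
    intro a b
    rw [map_mul, map_zpow, map_pow, hνy, hνt]
    rw [← ofAdd_zsmul, ← ofAdd_nsmul, ← ofAdd_add, zsmul_eq_mul, nsmul_eq_mul, mul_one]
  have hmf : (((m:ℕ)) : ZMod n) * (f : ZMod n) = 0 := by
    have h15 : ν (y ^ ((m:ℕ):ℤ)) = 1 := by rw [hymz, map_one]
    rw [map_zpow, hνy, ← ofAdd_zsmul, zsmul_eq_mul] at h15
    have h16 := ofAdd_eq_one.mp h15
    push_cast at h16
    exact h16
  -- membership characterizations
  set W : ℤ := h ^ j - 1 with hW
  have hcent : ∀ (a : ℤ) (b : ℕ),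
      (y ^ a * t ^ b ∈ Subgroup.centralizer {t ^ j} ↔ ((a:ℤ):ZMod m) * ((W : ℤ) : ZMod m) = 0) := by
    intro a b
    rw [Subgroup.mem_centralizer_iff]
    have h17 : t^j * (y^a*t^b) = y^(a*h^j) * (t^j * t^b) := by
      rw [← mul_assoc, htby' j a, mul_assoc]
    have h18 : (y^a*t^b) * t^j = y^a * (t^j * t^b) := by
      rw [mul_assoc, ← pow_add, ← pow_add, add_comm b j]
    constructor
    · intro hcomm
      have h16 := hcomm (t^j) (Set.mem_singleton _)
      rw [h17, h18] at h16
      have h19 : y^(a*h^j) = y^a := mul_right_cancel h16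
      have h20 := ydet _ _ h19
      rw [hW]
      push_cast at h20 ⊢
      linear_combination h20
    · intro hann g hg
      rw [Set.mem_singleton_iff] at hg; subst hg
      rw [hW] at hann
      have h21 : ((a * h^j : ℤ) : ZMod m) = ((a : ℤ) : ZMod m) := by
        push_cast at hann ⊢
        linear_combination hann
      rw [h17, h18, yeq _ _ h21]
  have hker : ∀ (a : ℤ) (b : ℕ),
      (y ^ a * t ^ b ∈ ν.ker ↔ ((a:ℤ) : ZMod n) * (f:ZMod n) + ((b:ℕ) : ZMod n) = 0) := by
    intro a b
    rw [MonoidHom.mem_ker, hνeval]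
    exact ofAdd_eq_one
  -- the bijection with the annihilator
  have hvalm : ∀ α : ZMod m, (((α.val : ℕ)) : ZMod m) = α := by
    intro α; rw [ZMod.natCast_val, ZMod.cast_id]
  have hvaln : ∀ β : ZMod n, (((β.val : ℕ)) : ZMod n) = β := by
    intro β; rw [ZMod.natCast_val, ZMod.cast_id]
  have hfcongr : ∀ a : ℤ, (((a : ZMod m).val : ZMod n)) * (f : ZMod n)
      = ((a : ℤ) : ZMod n) * (f : ZMod n) := by
    intro a
    have h1 : ((((a : ZMod m).val : ℤ)) : ZMod m) = ((a:ℤ) : ZMod m) := by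
      push_cast
      exact hvalm _
    have h2 : (m:ℤ) ∣ (((a : ZMod m).val : ℤ)) - a := by
      rw [← ZMod.intCast_zmod_eq_zero_iff_dvd]
      push_cast
      push_cast at h1
      rw [h1]; ring
    obtain ⟨k, hk⟩ := h2
    have h3 : (((a : ZMod m).val : ℤ)) = a + (m:ℤ) * k := by linarith
    have h3' : (((a : ZMod m).val : ZMod n))
        = ((a:ℤ) : ZMod n) + (((m:ℕ)) : ZMod n) * ((k:ℤ) : ZMod n) := by
      have h5 := congrArg (fun z : ℤ => ((z : ZMod n))) h3
      push_cast at h5 ⊢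
      exact h5
    rw [h3']
    have h4 : (((m:ℕ)) : ZMod n) * ((k:ℤ) : ZMod n) * (f : ZMod n) = 0 := by
      rw [mul_comm (((m:ℕ)) : ZMod n) ((k:ℤ) : ZMod n), mul_assoc, hmf, mul_zero]
    linear_combination h4
  have hmemto : ∀ α : {α : ZMod m // α * ((W : ℤ) : ZMod m) = 0},
      y ^ ((α.val.val : ℕ) : ℤ) * t ^ ((-((α.val.val : ZMod n) * (f : ZMod n))).val)
        ∈ ν.ker ⊓ Subgroup.centralizer {t ^ j} := by
    intro α
    rw [Subgroup.mem_inf]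
    constructor
    · rw [hker]
      rw [hvaln]
      push_cast
      ring
    · rw [hcent]
      have h5 : (((α.val.val : ℕ) : ℤ) : ZMod m) = α.val := by push_cast; exact hvalm _
      rw [h5]
      exact α.prop
  set toH : {α : ZMod m // α * ((W : ℤ) : ZMod m) = 0}
      → ↥(ν.ker ⊓ Subgroup.centralizer {t ^ j}) := fun α => ⟨_, hmemto α⟩ with htoH
  have hinj : Function.Injective toH := by
    intro α α' hαα
    have h22 : (toH α).val = (toH α').val := congrArg Subtype.val hαα
    rw [htoH] at h22
    have h23 := congrArg (fun e => φ e 0) h22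
    simp only at h23
    rw [hφeval, hφeval] at h23
    apply Subtype.ext
    have h24 : ((((α.val.val : ℕ)) : ℤ) : ZMod m) = ((((α'.val.val : ℕ)) : ℤ) : ZMod m) := h23
    push_cast at h24
    rw [hvalm, hvalm] at h24
    exact h24
  have hsurjH : Function.Surjective toH := by
    rintro ⟨x, hx⟩
    obtain ⟨a, b, rfl⟩ := hnf x
    rw [Subgroup.mem_inf] at hx
    obtain ⟨hx1, hx2⟩ := hx
    rw [hker] at hx1
    rw [hcent] at hx2
    refine ⟨⟨((a:ℤ) : ZMod m), hx2⟩, ?_⟩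
    apply Subtype.ext
    rw [htoH]
    show y ^ ((((a:ℤ) : ZMod m).val : ℕ) : ℤ) * t ^ _ = y ^ a * t ^ b
    have hya : y ^ ((((a:ℤ) : ZMod m).val : ℕ) : ℤ) = y ^ a := by
      apply yeq
      push_cast
      exact hvalm _
    have htb : t ^ ((-((((a:ℤ) : ZMod m).val : ZMod n) * (f : ZMod n))).val) = t ^ b := by
      apply tneq
      rw [hvaln]
      rw [hfcongr a]
      linear_combination -hx1
    rw [hya, htb]
  have hcardH : Nat.card ↥(ν.ker ⊓ Subgroup.centralizer {t ^ j})
      = Nat.card {α : ZMod m // α * ((W : ℤ) : ZMod m) = 0} :=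
    Nat.card_congr (Equiv.ofBijective toH ⟨hinj, hsurjH⟩).symm
  rw [hcardH, card_ann m hmne W]
  -- final gcd computation
  have hcopA'n : Nat.Coprime A' n := by
    have h26 : IsCoprime ((A':ℕ) : ℤ) ((n:ℕ) : ℤ) := ⟨A, -K, by linarith [hAA']⟩
    have h27 := Int.isCoprime_iff_gcd_eq_one.mp h26
    simpa [Int.gcd, Int.natAbs_natCast] using h27
  have e0 : W = c ^ (A' * j) - 1 := by rw [hW, hh, ← pow_mul]
  have hcop_sKm : Int.gcd (s ^ (A' * j)) ((m:ℕ):ℤ) = 1 :=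
    Int.isCoprime_iff_gcd_eq_one.mp (IsCoprime.pow_left hcop_sm)
  obtain ⟨Z1, hZ1⟩ : (m:ℤ) ∣ (s*c)^(A'*j) - r^(A'*j) :=
    dvd_trans hsc (sub_dvd_pow_sub_pow _ _ _)
  have e2 : s ^ (A'*j) * W = (r ^ (A'*j) - s ^ (A'*j)) + (m:ℤ) * Z1 := by
    rw [e0]
    linear_combination hZ1
  calc Int.gcd W ((m:ℕ):ℤ) = Int.gcd (s ^ (A'*j) * W) ((m:ℕ):ℤ) :=
        (int_gcd_unit_mul _ _ _ hcop_sKm).symm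
  _ = Int.gcd ((r ^ (A'*j) - s ^ (A'*j)) + ((m:ℕ):ℤ) * Z1) ((m:ℕ):ℤ) := by rw [e2]
  _ = Int.gcd (r ^ (A'*j) - s ^ (A'*j)) ((m:ℕ):ℤ) := int_gcd_add_mul _ _ _
  _ = Int.gcd (r ^ (A'*j) - s ^ (A'*j)) (r^n - s^n) := absg _
  _ = (r ^ Nat.gcd (A'*j) n - s ^ Nat.gcd (A'*j) n).natAbs := gcd_pow_sub_pow r s hrs n _
  _ = (r ^ Nat.gcd n j - s ^ Nat.gcd n j).natAbs := by
        rw [Nat.Coprime.gcd_mul_left_cancel j hcopA'n, Nat.gcd_comm]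
end
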